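/- arXiv:2411.19896 — 9 statements merged into one kernel-verified Lean document; each statement's English description precedes it below -/
import Mathlib

section
/- Let m, κ ∈ ℕ with m ≥ 1, let α* ∈ ℝ^m, r > 0, γ ≥ 0 and C ≥ 0. Let f : ℝ^m → ℝ be infinitely differentiable, suppose that for every k ∈ ℕ and every index tuple (i_1, …, i_k) ∈ {1, …, m}^k one has |∂_{i_1}⋯∂_{i_k} f(α*)| ≤ γ^k · C, and suppose that f coincides with its Taylor series at α* on V(α*, r), i.e. f(α) = Σ_{k=0}^{∞} (1/k!) Σ_{i_1,…,i_k=1}^{m} ∂_{i_1}⋯∂_{i_k} f(α*) ∏_{j=1}^{k}(α_{i_j} − α*_{i_j}) for all α ∈ V(α*, r). Then, for α distributed uniformly on V(α*, r), E[(f(α) − T_κ f(α))²] ≤ (2 γ² m r² / 3)^{κ+1} · (C² / (κ+1)!) · e^{2 γ² m r² / 3}. -/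
open MeasureTheory
open scoped ContDiff

noncomputable section
namespace TMSE

/-- uniform measure on `[c-r, c+r]`. -/
def nu (c r : ℝ) : Measure ℝ :=
  (ENNReal.ofReal (2 * r))⁻¹ • volume.restrict (Set.Icc (c - r) (c + r))

/-- moments of the centered uniform distribution. -/
def mom (r : ℝ) (e : ℕ) : ℝ := if Even e then r ^ e / (e + 1) else 0

lemma mom_nonneg {r : ℝ} (hr : 0 < r) (e : ℕ) : 0 ≤ mom r e := by
  unfold mom; split
  · positivity
  · exact le_refl 0

lemma mom_zero (r : ℝ) : mom r 0 = 1 := by simp [mom]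

lemma mom_odd {r : ℝ} {e : ℕ} (h : ¬ Even e) : mom r e = 0 := if_neg h

instance nu_prob (c : ℝ) (r : ℝ) [Fact (0 < r)] : IsProbabilityMeasure (nu c r) := by
  have hr : 0 < r := Fact.out
  constructor
  rw [nu, Measure.smul_apply, Measure.restrict_apply MeasurableSet.univ, Set.univ_inter,
    Real.volume_Icc, smul_eq_mul]
  rw [show c + r - (c - r) = 2 * r by ring]
  exact ENNReal.inv_mul_cancel (by simp [hr]) ENNReal.ofReal_ne_top

lemma integral_nu_pow {r : ℝ} (hr : 0 < r) (c : ℝ) (e : ℕ) :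
    ∫ t, (t - c) ^ e ∂nu c r = mom r e := by
  have h2r : (0:ℝ) ≤ 2 * r := by linarith
  have hle : c - r ≤ c + r := by linarith
  rw [nu, integral_smul_measure, ENNReal.toReal_inv, ENNReal.toReal_ofReal h2r]
  rw [integral_Icc_eq_integral_Ioc, ← intervalIntegral.integral_of_le hle]
  rw [intervalIntegral.integral_comp_sub_right (fun x => x ^ e) c]
  rw [show c - r - c = -r by ring, show c + r - c = r by ring]
  rw [integral_pow]
  rcases Nat.even_or_odd e with he | he
  · have : (-r) ^ (e + 1) = -(r ^ (e+1)) := Odd.neg_pow (Even.add_one he) r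
    rw [this, mom, if_pos he]
    have : r ^ (e+1) - -(r ^ (e+1)) = 2 * r * r ^ e := by ring
    rw [this]
    rw [smul_eq_mul]
    field_simp
  · have : (-r) ^ (e + 1) = r ^ (e+1) := Even.neg_pow (Odd.add_one he) r
    rw [this, mom, if_neg (Nat.not_even_iff_odd.mpr he), sub_self, zero_div, smul_zero]


/-- Fubini for finite products of probability measures on ℝ. -/
theorem integral_pi_prod : ∀ (n : ℕ) (ν : Fin n → Measure ℝ),
    (∀ i, IsProbabilityMeasure (ν i)) → ∀ (g : Fin n → ℝ → ℝ),
    ∫ x, ∏ i, g i (x i) ∂Measure.pi ν = ∏ i, ∫ t, g i t ∂ν i := by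
  intro n
  induction n with
  | zero =>
      intro ν hν g
      simp only [Finset.univ_eq_empty, Finset.prod_empty, integral_const]
      haveI := fun i => hν i
      haveI : IsProbabilityMeasure (Measure.pi ν) := Measure.pi.instIsProbabilityMeasure _
      simp
  | succ n ih =>
      intro ν hν g
      haveI := fun i => hν i
      calc
        ∫ x, ∏ i, g i (x i) ∂Measure.pi ν
            = ∫ p : ℝ × (Fin n → ℝ), g 0 p.1 * ∏ i : Fin n, g i.succ (p.2 i)
                ∂((ν 0).prod (Measure.pi fun i => ν (Fin.succAbove 0 i))) := by
              rw [← ((measurePreserving_piFinSuccAbove ν 0).symm).integral_comp']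
              congr 1
              ext p
              simp only [MeasurableEquiv.piFinSuccAbove_symm_apply, Fin.insertNthEquiv,
                Equiv.coe_fn_mk, Fin.insertNth_zero]
              rw [Fin.prod_univ_succ]
              simp [Fin.zero_succAbove]
        _ = (∫ t, g 0 t ∂ν 0) * ∫ y : (Fin n → ℝ), ∏ i : Fin n, g i.succ (y i)
                ∂(Measure.pi fun i => ν (Fin.succAbove 0 i)) :=
              integral_prod_mul (g 0) (fun y : Fin n → ℝ => ∏ i : Fin n, g i.succ (y i))
        _ = (∫ t, g 0 t ∂ν 0) * ∏ i : Fin n, ∫ t, g i.succ t ∂ν i.succ := by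
              congr 1
              have := ih (fun i => ν (Fin.succAbove 0 i)) (fun i => hν _)
                (fun i => g (Fin.succAbove 0 i))
              simpa [Fin.zero_succAbove] using this
        _ = ∏ i, ∫ t, g i t ∂ν i := by rw [Fin.prod_univ_succ]


variable {m : ℕ}

def mu (αs : Fin m → ℝ) (r : ℝ) : Measure (Fin m → ℝ) :=
  Measure.pi fun i => nu (αs i) r

def Mon (αs : Fin m → ℝ) (e : Fin m → ℕ) (α : Fin m → ℝ) : ℝ :=
  ∏ i, (α i - αs i) ^ e i

def Smf (αs : Fin m → ℝ) (t : Finset (Fin m)) (α : Fin m → ℝ) : ℝ :=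
  ∑ i ∈ t, (α i - αs i)

variable (αs : Fin m → ℝ) {r : ℝ}

lemma mu_prob [Fact (0 < r)] : IsProbabilityMeasure (mu αs r) :=
  Measure.pi.instIsProbabilityMeasure _

lemma integral_Mon (hr : 0 < r) (e : Fin m → ℕ) :
    ∫ α, Mon αs e α ∂mu αs r = ∏ i, mom r (e i) := by
  haveI : Fact (0 < r) := ⟨hr⟩
  have h1 : ∫ α, Mon αs e α ∂mu αs r = ∏ i, ∫ t, (t - αs i) ^ e i ∂nu (αs i) r :=
    integral_pi_prod m (fun i => nu (αs i) r) (fun i => nu_prob (αs i) r)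
      (fun i t => (t - αs i) ^ e i)
  rw [h1]
  exact Finset.prod_congr rfl fun i _ => integral_nu_pow hr (αs i) (e i)

lemma Mon_nonneg_integral (hr : 0 < r) (e : Fin m → ℕ) :
    0 ≤ ∫ α, Mon αs e α ∂mu αs r := by
  rw [integral_Mon αs hr e]
  exact Finset.prod_nonneg fun i _ => mom_nonneg hr _

lemma ae_cube (hr : 0 < r) : ∀ᵐ α ∂mu αs r, ∀ i, |α i - αs i| ≤ r := by
  haveI : Fact (0 < r) := ⟨hr⟩
  haveI := mu_prob αs (r := r)
  set s : Set (Fin m → ℝ) := Set.pi Set.univ (fun i => Set.Icc (αs i - r) (αs i + r)) with hs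
  have hsm : MeasurableSet s := MeasurableSet.univ_pi fun i => measurableSet_Icc
  have hval : mu αs r s = 1 := by
    rw [hs, mu, Measure.pi_pi]
    have : ∀ i : Fin m, nu (αs i) r (Set.Icc (αs i - r) (αs i + r)) = 1 := by
      intro i
      rw [nu, Measure.smul_apply, Measure.restrict_apply measurableSet_Icc, Set.inter_self,
        Real.volume_Icc, smul_eq_mul, show αs i + r - (αs i - r) = 2 * r by ring]
      exact ENNReal.inv_mul_cancel (by simp [hr]) ENNReal.ofReal_ne_top
    simp [this]
  have hcompl : mu αs r sᶜ = 0 := by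
    rw [measure_compl hsm (measure_ne_top _ _), hval, measure_univ, tsub_self]
  have hae : ∀ᵐ α ∂mu αs r, α ∈ s := by
    rw [ae_iff]
    convert hcompl using 2
    rfl
  filter_upwards [hae] with α hα i
  have := hα i (Set.mem_univ i)
  rw [Set.mem_Icc] at this
  exact abs_le.mpr ⟨by linarith [this.1], by linarith [this.2]⟩

lemma integrable_cont (hr : 0 < r) {g : (Fin m → ℝ) → ℝ} (hg : Continuous g) :
    Integrable g (mu αs r) := by
  haveI : Fact (0 < r) := ⟨hr⟩
  haveI := mu_prob αs (r := r)
  have hK : IsCompact (Set.pi Set.univ (fun i => Set.Icc (αs i - r) (αs i + r))) :=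
    isCompact_univ_pi fun i => isCompact_Icc
  obtain ⟨Cb, hCb⟩ := hK.exists_bound_of_continuousOn hg.continuousOn
  refine Integrable.mono' (integrable_const Cb) hg.aestronglyMeasurable ?_
  filter_upwards [ae_cube αs hr] with α hα
  refine hCb α ?_
  intro i _
  rw [Set.mem_Icc]
  have := abs_le.mp (hα i)
  exact ⟨by linarith [this.1], by linarith [this.2]⟩

lemma Mon_continuous (e : Fin m → ℕ) : Continuous (Mon αs e) := by
  refine continuous_finset_prod _ fun i _ => ?_
  exact ((continuous_apply i).sub continuous_const).pow _

lemma Smf_continuous (t : Finset (Fin m)) : Continuous (Smf αs t) := by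
  refine continuous_finset_sum _ fun i _ => ?_
  exact (continuous_apply i).sub continuous_const

def cnt {q : ℕ} (g : Fin q → Fin m) (i : Fin m) : ℕ :=
  (Finset.univ.filter fun u => g u = i).card

lemma prod_comp_cnt {q : ℕ} (g : Fin q → Fin m) (y : Fin m → ℝ) :
    ∏ u, y (g u) = ∏ i, y i ^ cnt g i := by
  rw [Finset.prod_comp y g]
  refine Finset.prod_subset (Finset.subset_univ _) ?_
  intro b _ hb
  have : cnt g b = 0 := by
    rw [cnt, Finset.card_eq_zero, Finset.filter_eq_empty_iff]
    intro u _
    exact fun h => hb (Finset.mem_image.mpr ⟨u, Finset.mem_univ u, h⟩)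
  rw [show (Finset.univ.filter fun u => g u = b).card = cnt g b from rfl, this, pow_zero]

lemma cnt_eq_zero {q : ℕ} {g : Fin q → Fin m} {a : Fin m} (ha : ∀ u, g u ≠ a) :
    cnt g a = 0 := by
  rw [cnt, Finset.card_eq_zero, Finset.filter_eq_empty_iff]
  exact fun u _ => ha u

lemma update_Mon {a : Fin m} (j : ℕ) {e : Fin m → ℕ} (he : e a = 0) (α : Fin m → ℝ) :
    (α a - αs a) ^ j * Mon αs e α = Mon αs (Function.update e a j) α := by
  have h1 : ∏ i ∈ Finset.univ.erase a, (α i - αs i) ^ Function.update e a j i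
      = ∏ i ∈ Finset.univ.erase a, (α i - αs i) ^ e i :=
    Finset.prod_congr rfl fun i hi => by
      rw [Function.update_of_ne (Finset.ne_of_mem_erase hi)]
  rw [Mon, Mon,
    ← Finset.prod_erase_mul Finset.univ (fun i => (α i - αs i) ^ e i) (Finset.mem_univ a),
    ← Finset.prod_erase_mul Finset.univ (fun i => (α i - αs i) ^ Function.update e a j i)
      (Finset.mem_univ a), h1, he, Function.update_self, pow_zero, mul_one]
  ring

lemma integral_mon_factor (hr : 0 < r) {q : ℕ} {g : Fin q → Fin m} {a : Fin m}
    (ha : ∀ u, g u ≠ a) (j : ℕ) :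
    ∫ α, (α a - αs a) ^ j * ∏ u, (α (g u) - αs (g u)) ∂mu αs r
      = mom r j * ∫ α, ∏ u, (α (g u) - αs (g u)) ∂mu αs r := by
  have hP : ∀ α : Fin m → ℝ, (∏ u, (α (g u) - αs (g u))) = Mon αs (cnt g) α := fun α =>
    prod_comp_cnt g (fun i => α i - αs i)
  have hca : cnt g a = 0 := cnt_eq_zero ha
  have h1 : ∀ α : Fin m → ℝ, (α a - αs a) ^ j * ∏ u, (α (g u) - αs (g u))
      = Mon αs (Function.update (cnt g) a j) α := by
    intro α; rw [hP α, update_Mon αs j hca α]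
  calc ∫ α, (α a - αs a) ^ j * ∏ u, (α (g u) - αs (g u)) ∂mu αs r
      = ∫ α, Mon αs (Function.update (cnt g) a j) α ∂mu αs r := by
        exact integral_congr_ae (Filter.Eventually.of_forall fun α => h1 α)
    _ = ∏ i, mom r (Function.update (cnt g) a j i) := integral_Mon αs hr _
    _ = mom r j * ∏ i, mom r (cnt g i) := by
        rw [← Finset.mul_prod_erase Finset.univ _ (Finset.mem_univ a),
          ← Finset.mul_prod_erase Finset.univ (fun i => mom r (cnt g i)) (Finset.mem_univ a)]
        rw [Function.update_self, hca, mom_zero, one_mul]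
        congr 1
        refine Finset.prod_congr rfl fun i hi => ?_
        rw [Function.update_of_ne (Finset.ne_of_mem_erase hi)]
    _ = mom r j * ∫ α, ∏ u, (α (g u) - αs (g u)) ∂mu αs r := by
        rw [show (∫ α, ∏ u, (α (g u) - αs (g u)) ∂mu αs r)
            = ∫ α, Mon αs (cnt g) α ∂mu αs r from
          integral_congr_ae (Filter.Eventually.of_forall fun α => hP α)]
        rw [integral_Mon αs hr]

lemma split (hr : 0 < r) {t : Finset (Fin m)} {a : Fin m} (ha : a ∉ t) (j q : ℕ) :
    ∫ α, (α a - αs a) ^ j * (Smf αs t α) ^ q ∂mu αs r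
      = mom r j * ∫ α, (Smf αs t α) ^ q ∂mu αs r := by
  have expand : ∀ α : Fin m → ℝ,
      (Smf αs t α) ^ q = ∑ p : Fin q → ↥t, ∏ u, (α ↑(p u) - αs ↑(p u)) := by
    intro α
    rw [Smf, ← Finset.sum_coe_sort t (fun i => α i - αs i), Fintype.sum_pow]
  have hint : ∀ p : Fin q → ↥t,
      Integrable (fun α => (α a - αs a) ^ j * ∏ u, (α ((p u : Fin m)) - αs ((p u : Fin m))))
        (mu αs r) := by
    intro p
    refine integrable_cont αs hr ?_
    exact (((continuous_apply a).sub continuous_const).pow _).mul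
      (continuous_finset_prod _ fun u _ =>
        (continuous_apply ((p u : Fin m))).sub continuous_const)
  have hint2 : ∀ p : Fin q → ↥t,
      Integrable (fun α => ∏ u, (α ((p u : Fin m)) - αs ((p u : Fin m)))) (mu αs r) := by
    intro p
    exact integrable_cont αs hr (continuous_finset_prod _ fun u _ =>
      (continuous_apply ((p u : Fin m))).sub continuous_const)
  calc ∫ α, (α a - αs a) ^ j * (Smf αs t α) ^ q ∂mu αs r
      = ∫ α, ∑ p : Fin q → ↥t, (α a - αs a) ^ j * ∏ u, (α ↑(p u) - αs ↑(p u)) ∂mu αs r := by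
        refine integral_congr_ae (Filter.Eventually.of_forall fun α => ?_)
        show (α a - αs a) ^ j * (Smf αs t α) ^ q = _
        rw [expand α, Finset.mul_sum]
    _ = ∑ p : Fin q → ↥t, ∫ α, (α a - αs a) ^ j * ∏ u, (α ↑(p u) - αs ↑(p u)) ∂mu αs r :=
        integral_finset_sum _ fun p _ => hint p
    _ = ∑ p : Fin q → ↥t, mom r j * ∫ α, ∏ u, (α ↑(p u) - αs ↑(p u)) ∂mu αs r := by
        refine Finset.sum_congr rfl fun p _ => ?_
        exact integral_mon_factor αs hr (fun u h => ha (by rw [← h]; exact (p u).2)) j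
    _ = mom r j * ∑ p : Fin q → ↥t, ∫ α, ∏ u, (α ↑(p u) - αs ↑(p u)) ∂mu αs r := by
        rw [Finset.mul_sum]
    _ = mom r j * ∫ α, (Smf αs t α) ^ q ∂mu αs r := by
        congr 1
        rw [← integral_finset_sum _ fun p _ => hint2 p]
        refine integral_congr_ae (Filter.Eventually.of_forall fun α => ?_)
        show _ = Smf αs t α ^ q
        exact (expand α).symm

lemma six_pow_mul_factorial_le (q : ℕ) : 6 ^ q * q.factorial ≤ (2 * q + 1).factorial := by
  induction q with
  | zero => simp
  | succ q ih =>
      have h1 : 2 * (q + 1) + 1 = (2 * q + 1) + 1 + 1 := by ring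
      rw [h1, Nat.factorial_succ (2 * q + 1 + 1), Nat.factorial_succ (2 * q + 1)]
      have h2 : 6 ^ (q + 1) * (q + 1).factorial
          = (6 * (q + 1)) * (6 ^ q * q.factorial) := by
        rw [pow_succ, Nat.factorial_succ]; ring
      rw [h2]
      have h3 : 6 * (q + 1) ≤ (2 * q + 1 + 1 + 1) * (2 * q + 1 + 1) := by nlinarith
      calc (6 * (q + 1)) * (6 ^ q * q.factorial)
          ≤ ((2 * q + 1 + 1 + 1) * (2 * q + 1 + 1)) * (2 * q + 1).factorial :=
            Nat.mul_le_mul h3 ih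
        _ = (2 * q + 1 + 1 + 1) * ((2 * q + 1 + 1) * (2 * q + 1).factorial) := by ring

lemma mom_le (hr : 0 < r) (q : ℕ) :
    mom r (2 * q) ≤ ((2 * q).factorial : ℝ) / (2 ^ q * q.factorial) * (r ^ 2 / 3) ^ q := by
  have key : (6 : ℝ) ^ q * q.factorial ≤ (2 * q + 1).factorial := by
    exact_mod_cast six_pow_mul_factorial_le q
  have h1 : ((2 * q + 1).factorial : ℝ) = (2 * (q:ℝ) + 1) * (2 * q).factorial := by
    have := Nat.factorial_succ (2 * q)
    push_cast [this]; ring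
  have e1 : mom r (2 * q) = (r ^ 2) ^ q / (2 * (q:ℝ) + 1) := by
    rw [mom, if_pos (even_two_mul q), pow_mul]
    push_cast
    ring_nf
  rw [e1, div_le_iff₀ (by positivity)]
  have hfrac : ((2 * q).factorial : ℝ) / (2 ^ q * q.factorial) * (r ^ 2 / 3) ^ q
        * (2 * (q:ℝ) + 1)
      = ((2 * q + 1).factorial : ℝ) * (r ^ 2) ^ q / (6 ^ q * q.factorial) := by
    rw [h1, div_pow]
    have h6 : (6:ℝ) ^ q = 2 ^ q * 3 ^ q := by rw [← mul_pow]; norm_num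
    rw [h6]
    have hq : (q.factorial : ℝ) ≠ 0 := by positivity
    field_simp
  rw [hfrac, le_div_iff₀ (by positivity)]
  have hx : (0:ℝ) ≤ (r ^ 2) ^ q := by positivity
  calc (r ^ 2) ^ q * (6 ^ q * (q.factorial:ℝ))
      ≤ (r ^ 2) ^ q * ((2 * q + 1).factorial : ℝ) := mul_le_mul_of_nonneg_left key hx
    _ = ((2 * q + 1).factorial : ℝ) * (r ^ 2) ^ q := by ring

lemma sum_even_range (g : ℕ → ℝ) (h : ∀ n, ¬ Even n → g n = 0) :
    ∀ N, ∑ n ∈ Finset.range (2 * N), g n = ∑ s ∈ Finset.range N, g (2 * s) := by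
  intro N
  induction N with
  | zero => simp
  | succ N ih =>
      have h1 : 2 * (N + 1) = (2 * N + 1) + 1 := by ring
      rw [h1, Finset.sum_range_succ, Finset.sum_range_succ, ih, Finset.sum_range_succ]
      have : g (2 * N + 1) = 0 := h _ (by simp [Nat.even_add_one])
      rw [this, add_zero]

lemma sum_even_range_odd (g : ℕ → ℝ) (h : ∀ n, ¬ Even n → g n = 0) (p : ℕ) :
    ∑ n ∈ Finset.range (2 * p + 1), g n = ∑ s ∈ Finset.range (p + 1), g (2 * s) := by
  rw [Finset.sum_range_succ, Finset.sum_range_succ, ← sum_even_range g h p]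

lemma moment_key (hr : 0 < r) {t : Finset (Fin m)} {a : Fin m} (ha : a ∉ t) (n : ℕ) :
    ∫ α, (Smf αs (insert a t) α) ^ n ∂mu αs r
      = ∑ j ∈ Finset.range (n + 1),
          (mom r j * ∫ α, (Smf αs t α) ^ (n - j) ∂mu αs r) * (n.choose j : ℝ) := by
  have hSm : ∀ α : Fin m → ℝ, Smf αs (insert a t) α = (α a - αs a) + Smf αs t α := by
    intro α; rw [Smf, Finset.sum_insert ha]; rfl
  have hint : ∀ j : ℕ, Integrable
      (fun α => (α a - αs a) ^ j * (Smf αs t α) ^ (n - j) * (n.choose j : ℝ)) (mu αs r) := by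
    intro j
    refine integrable_cont αs hr ?_
    exact ((((continuous_apply a).sub continuous_const).pow j).mul
      ((Smf_continuous αs t).pow (n - j))).mul continuous_const
  calc ∫ α, (Smf αs (insert a t) α) ^ n ∂mu αs r
      = ∫ α, ∑ j ∈ Finset.range (n + 1),
          (α a - αs a) ^ j * (Smf αs t α) ^ (n - j) * (n.choose j : ℝ) ∂mu αs r := by
        refine integral_congr_ae (Filter.Eventually.of_forall fun α => ?_)
        show (Smf αs (insert a t) α) ^ n = _
        rw [hSm α, add_pow]
    _ = ∑ j ∈ Finset.range (n + 1),
          ∫ α, (α a - αs a) ^ j * (Smf αs t α) ^ (n - j) * (n.choose j : ℝ) ∂mu αs r :=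
        integral_finset_sum _ fun j _ => hint j
    _ = ∑ j ∈ Finset.range (n + 1),
          (mom r j * ∫ α, (Smf αs t α) ^ (n - j) ∂mu αs r) * (n.choose j : ℝ) := by
        refine Finset.sum_congr rfl fun j _ => ?_
        rw [integral_mul_const, split αs hr ha j (n - j)]

lemma moment_bound (hr : 0 < r) (t : Finset (Fin m)) :
    ∀ n : ℕ,
      (¬ Even n → ∫ α, (Smf αs t α) ^ n ∂mu αs r = 0) ∧
      (0 ≤ ∫ α, (Smf αs t α) ^ n ∂mu αs r) ∧
      (∀ p, n = 2 * p →
        ∫ α, (Smf αs t α) ^ n ∂mu αs r ≤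
          ((2 * p).factorial : ℝ) / (2 ^ p * p.factorial) * ((t.card : ℝ) * r ^ 2 / 3) ^ p) := by
  haveI : Fact (0 < r) := ⟨hr⟩
  haveI := mu_prob αs (r := r)
  induction t using Finset.induction_on with
  | empty =>
      intro n
      have hS : ∀ α : Fin m → ℝ, Smf αs ∅ α = 0 := fun α => Finset.sum_empty
      rcases Nat.eq_zero_or_pos n with hn | hn
      · subst hn
        have h1 : ∫ α, (Smf αs ∅ α) ^ 0 ∂mu αs r = 1 := by
          simp
        refine ⟨fun h => absurd Even.zero h, by rw [h1]; norm_num, fun p hp => ?_⟩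
        have hp0 : p = 0 := by omega
        subst hp0
        rw [h1]; simp
      · have h0 : ∫ α, (Smf αs ∅ α) ^ n ∂mu αs r = 0 := by
          have : ∀ α : Fin m → ℝ, (Smf αs ∅ α) ^ n = 0 := fun α => by
            rw [hS α, zero_pow (Nat.pos_iff_ne_zero.mp hn)]
          rw [integral_congr_ae (Filter.Eventually.of_forall this), integral_zero]
        refine ⟨fun _ => h0, le_of_eq h0.symm, fun p hp => ?_⟩
        rw [h0]
        have hppos : 0 < p := by omega
        have : ((0:ℕ) : ℝ) * r ^ 2 / 3 = 0 := by norm_num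
        rw [Finset.card_empty]
        rw [this, zero_pow (Nat.pos_iff_ne_zero.mp hppos), mul_zero]
  | insert _ _ ha =>
      rename_i a t iha
      intro n
      rw [moment_key αs hr ha n]
      have IH := iha
      -- nonnegativity of all terms
      have term_nonneg : ∀ j ∈ Finset.range (n + 1),
          0 ≤ (mom r j * ∫ α, (Smf αs t α) ^ (n - j) ∂mu αs r) * (n.choose j : ℝ) := by
        intro j _
        have h1 := (IH (n - j)).2.1
        have h2 := mom_nonneg (r := r) hr j
        have h3 : (0:ℝ) ≤ (n.choose j : ℝ) := by positivity
        exact mul_nonneg (mul_nonneg h2 h1) h3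
      refine ⟨?_, Finset.sum_nonneg term_nonneg, ?_⟩
      · intro hodd
        refine Finset.sum_eq_zero fun j hj => ?_
        rcases Nat.even_or_odd j with hje | hjo
        · have hjn : j ≤ n := Nat.lt_succ_iff.mp (Finset.mem_range.mp hj)
          have : ¬ Even (n - j) := by
            intro he
            exact hodd (by simpa [Nat.sub_add_cancel hjn] using he.add hje)
          rw [(IH (n - j)).1 this, mul_zero, zero_mul]
        · rw [mom_odd (Nat.not_even_iff_odd.mpr hjo), zero_mul, zero_mul]
      · intro p hp
        subst hp
        set c : ℕ := t.card with hc
        have hcard : (insert a t).card = c + 1 := Finset.card_insert_of_notMem ha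
        -- only even j contribute
        have hzero : ∀ j, ¬ Even j →
            (mom r j * ∫ α, (Smf αs t α) ^ (2 * p - j) ∂mu αs r) * ((2 * p).choose j : ℝ)
              = 0 := by
          intro j hj
          rw [mom_odd hj, zero_mul, zero_mul]
        rw [sum_even_range_odd _ hzero p]
        have hbound : ∀ q ∈ Finset.range (p + 1),
            (mom r (2 * q) * ∫ α, (Smf αs t α) ^ (2 * p - 2 * q) ∂mu αs r)
                * ((2 * p).choose (2 * q) : ℝ)
              ≤ ((2 * p).factorial : ℝ) / (2 ^ p * p.factorial) * (p.choose q : ℝ)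
                  * (r ^ 2 / 3) ^ p * (c : ℝ) ^ (p - q) := by
          intro q hq
          have hqp : q ≤ p := Nat.lt_succ_iff.mp (Finset.mem_range.mp hq)
          have hsub : 2 * p - 2 * q = 2 * (p - q) := by omega
          have hIle := ((IH (2 * p - 2 * q)).2.2 (p - q) hsub)
          have hInn := (IH (2 * p - 2 * q)).2.1
          have hmomle := mom_le (r := r) hr q
          have hmomnn := mom_nonneg hr (2 * q)
          have hchoose : (0:ℝ) ≤ ((2 * p).choose (2 * q) : ℝ) := by positivity
          have step1 : mom r (2 * q) * ∫ α, (Smf αs t α) ^ (2 * p - 2 * q) ∂mu αs r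
              ≤ (((2 * q).factorial : ℝ) / (2 ^ q * q.factorial) * (r ^ 2 / 3) ^ q)
                * (((2 * (p - q)).factorial : ℝ) / (2 ^ (p - q) * (p - q).factorial)
                  * ((c : ℝ) * r ^ 2 / 3) ^ (p - q)) := by
            refine mul_le_mul hmomle hIle hInn ?_
            positivity
          refine le_trans (mul_le_mul_of_nonneg_right step1 hchoose) (le_of_eq ?_)
          -- now a pure arithmetic identity
          obtain ⟨u, hu⟩ : ∃ u, p = q + u := ⟨p - q, by omega⟩
          subst hu
          rw [Nat.add_sub_cancel_left]
          have hfac : ((2 * (q + u)).choose (2 * q) : ℝ) * (2 * q).factorial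
              * (2 * u).factorial = ((2 * (q + u)).factorial : ℝ) := by
            have h2 : 2 * q ≤ 2 * (q + u) := by omega
            have h3 := Nat.choose_mul_factorial_mul_factorial h2
            have hsub2 : 2 * (q + u) - 2 * q = 2 * u := by omega
            rw [hsub2] at h3
            exact_mod_cast congrArg (Nat.cast (R := ℝ)) h3
          have hfacp : ((q + u).choose q : ℝ) * q.factorial * u.factorial
              = ((q + u).factorial : ℝ) := by
            have h3 := Nat.choose_mul_factorial_mul_factorial (Nat.le_add_right q u)
            rw [Nat.add_sub_cancel_left] at h3
            exact_mod_cast congrArg (Nat.cast (R := ℝ)) h3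
          have hqf : ((q.factorial : ℝ)) ≠ 0 := by positivity
          have huf : ((u.factorial : ℝ)) ≠ 0 := by positivity
          have hpf : (((q + u).factorial : ℝ)) ≠ 0 := by positivity
          field_simp
          rw [← hfac, ← hfacp]
          ring
        calc ∑ q ∈ Finset.range (p + 1),
              (mom r (2 * q) * ∫ α, (Smf αs t α) ^ (2 * p - 2 * q) ∂mu αs r)
                * ((2 * p).choose (2 * q) : ℝ)
            ≤ ∑ q ∈ Finset.range (p + 1),
              ((2 * p).factorial : ℝ) / (2 ^ p * p.factorial) * (p.choose q : ℝ)
                * (r ^ 2 / 3) ^ p * (c : ℝ) ^ (p - q) :=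
              Finset.sum_le_sum hbound
          _ = ((2 * p).factorial : ℝ) / (2 ^ p * p.factorial)
                * (((insert a t).card : ℝ) * r ^ 2 / 3) ^ p := by
              rw [hcard]
              have hsum : ∑ q ∈ Finset.range (p + 1), (p.choose q : ℝ) * (c : ℝ) ^ (p - q)
                  = ((c : ℝ) + 1) ^ p := by
                have h1 : ∑ q ∈ Finset.range (p + 1), (p.choose q : ℝ) * (c : ℝ) ^ (p - q)
                    = ∑ q ∈ Finset.range (p + 1), (p.choose q : ℝ) * (c : ℝ) ^ q := by
                  rw [← Finset.sum_range_reflect]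
                  refine Finset.sum_congr rfl fun q hq => ?_
                  have hqp : q ≤ p := Nat.lt_succ_iff.mp (Finset.mem_range.mp hq)
                  have e1 : p + 1 - 1 - q = p - q := by omega
                  have e2 : p - (p - q) = q := by omega
                  rw [e1, Nat.choose_symm hqp, e2]
                rw [h1, add_pow]
                refine Finset.sum_congr rfl fun q hq => ?_
                rw [one_pow]
                ring
              have hcast : (((c + 1 : ℕ)) : ℝ) = (c : ℝ) + 1 := by push_cast; ring
              rw [hcast]
              rw [show (((c:ℝ) + 1) * r ^ 2 / 3) ^ p = ((c:ℝ) + 1) ^ p * (r ^ 2 / 3) ^ p by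
                rw [← mul_pow]; congr 1; ring]
              rw [← hsum, Finset.sum_mul, Finset.mul_sum]
              refine Finset.sum_congr rfl fun q hq => ?_
              ring

/-- abstract Taylor-coefficient layer -/
def acoef (αs : Fin m → ℝ) (Dc : (k : ℕ) → (Fin k → Fin m) → ℝ) (k : ℕ)
    (α : Fin m → ℝ) : ℝ :=
  (1 / (k.factorial : ℝ)) * ∑ idx : Fin k → Fin m,
    Dc k idx * ∏ j, (α (idx j) - αs (idx j))

lemma acoef_continuous (Dc : (k : ℕ) → (Fin k → Fin m) → ℝ) (k : ℕ) :
    Continuous (acoef αs Dc k) := by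
  refine continuous_const.mul ?_
  refine continuous_finset_sum _ fun idx _ => ?_
  refine continuous_const.mul ?_
  exact continuous_finset_prod _ fun j _ =>
    (continuous_apply (idx j)).sub continuous_const

lemma prodP_continuous {k : ℕ} (idx : Fin k → Fin m) :
    Continuous (fun α : Fin m → ℝ => ∏ j, (α (idx j) - αs (idx j))) :=
  continuous_finset_prod _ fun j _ => (continuous_apply (idx j)).sub continuous_const

lemma integral_prodP_nonneg (hr : 0 < r) {k l : ℕ} (idx : Fin k → Fin m)
    (idx' : Fin l → Fin m) :
    0 ≤ ∫ α, (∏ j, (α (idx j) - αs (idx j))) * ∏ j, (α (idx' j) - αs (idx' j))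
      ∂mu αs r := by
  have hPP : ∀ α : Fin m → ℝ,
      (∏ j, (α (idx j) - αs (idx j))) * ∏ j, (α (idx' j) - αs (idx' j))
        = Mon αs (fun i => cnt idx i + cnt idx' i) α := by
    intro α
    rw [prod_comp_cnt idx (fun i => α i - αs i), prod_comp_cnt idx' (fun i => α i - αs i),
      Mon, ← Finset.prod_mul_distrib]
    exact Finset.prod_congr rfl fun i _ => (pow_add _ _ _).symm
  rw [integral_congr_ae (Filter.Eventually.of_forall hPP)]
  exact Mon_nonneg_integral αs hr _

lemma acoef_pair_bound (hr : 0 < r) {γ C : ℝ} (hγ : 0 ≤ γ) (hC : 0 ≤ C)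
    (Dc : (k : ℕ) → (Fin k → Fin m) → ℝ)
    (hD : ∀ (k : ℕ) (idx : Fin k → Fin m), |Dc k idx| ≤ γ ^ k * C) (k l : ℕ) :
    ∫ α, acoef αs Dc k α * acoef αs Dc l α ∂mu αs r
      ≤ γ ^ (k + l) * C ^ 2 / ((k.factorial : ℝ) * l.factorial)
          * ∫ α, (Smf αs Finset.univ α) ^ (k + l) ∂mu αs r := by
  have hexp : ∀ α : Fin m → ℝ, acoef αs Dc k α * acoef αs Dc l α
      = ∑ idx : Fin k → Fin m, ∑ idx' : Fin l → Fin m,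
          ((1 / (k.factorial : ℝ)) * Dc k idx) * ((1 / (l.factorial : ℝ)) * Dc l idx')
            * ((∏ j, (α (idx j) - αs (idx j))) * ∏ j, (α (idx' j) - αs (idx' j))) := by
    intro α
    rw [acoef, acoef, Finset.mul_sum, Finset.mul_sum, Finset.sum_mul_sum]
    refine Finset.sum_congr rfl fun idx _ => Finset.sum_congr rfl fun idx' _ => ?_
    ring
  have hintPP : ∀ (idx : Fin k → Fin m) (idx' : Fin l → Fin m),
      Integrable (fun α =>
        (∏ j, (α (idx j) - αs (idx j))) * ∏ j, (α (idx' j) - αs (idx' j))) (mu αs r) :=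
    fun idx idx' => integrable_cont αs hr
      ((prodP_continuous αs idx).mul (prodP_continuous αs idx'))
  have hint : ∀ (idx : Fin k → Fin m) (idx' : Fin l → Fin m),
      Integrable (fun α =>
        ((1 / (k.factorial : ℝ)) * Dc k idx) * ((1 / (l.factorial : ℝ)) * Dc l idx')
          * ((∏ j, (α (idx j) - αs (idx j))) * ∏ j, (α (idx' j) - αs (idx' j))))
        (mu αs r) := fun idx idx' => (hintPP idx idx').const_mul _
  calc ∫ α, acoef αs Dc k α * acoef αs Dc l α ∂mu αs r
      = ∑ idx : Fin k → Fin m, ∑ idx' : Fin l → Fin m,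
          ((1 / (k.factorial : ℝ)) * Dc k idx) * ((1 / (l.factorial : ℝ)) * Dc l idx')
            * ∫ α, (∏ j, (α (idx j) - αs (idx j))) * ∏ j, (α (idx' j) - αs (idx' j))
                ∂mu αs r := by
        rw [integral_congr_ae (Filter.Eventually.of_forall hexp)]
        rw [integral_finset_sum _ fun idx _ => integrable_finset_sum _ fun idx' _ =>
          hint idx idx']
        refine Finset.sum_congr rfl fun idx _ => ?_
        rw [integral_finset_sum _ fun idx' _ => hint idx idx']
        exact Finset.sum_congr rfl fun idx' _ => integral_const_mul _ _
    _ ≤ ∑ idx : Fin k → Fin m, ∑ idx' : Fin l → Fin m,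
          (1 / (k.factorial : ℝ)) * (1 / (l.factorial : ℝ)) * (γ ^ k * C) * (γ ^ l * C)
            * ∫ α, (∏ j, (α (idx j) - αs (idx j))) * ∏ j, (α (idx' j) - αs (idx' j))
                ∂mu αs r := by
        refine Finset.sum_le_sum fun idx _ => Finset.sum_le_sum fun idx' _ => ?_
        refine mul_le_mul_of_nonneg_right ?_ (integral_prodP_nonneg αs hr idx idx')
        have h1 : ((1 / (k.factorial : ℝ)) * Dc k idx) * ((1 / (l.factorial : ℝ)) * Dc l idx')
            ≤ |((1 / (k.factorial : ℝ)) * Dc k idx) * ((1 / (l.factorial : ℝ)) * Dc l idx')| :=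
          le_abs_self _
        refine h1.trans ?_
        rw [abs_mul, abs_mul, abs_mul]
        have hk : |(1 / (k.factorial : ℝ))| = 1 / (k.factorial : ℝ) := by
          rw [abs_of_pos]; positivity
        have hl : |(1 / (l.factorial : ℝ))| = 1 / (l.factorial : ℝ) := by
          rw [abs_of_pos]; positivity
        rw [hk, hl]
        have := mul_le_mul (mul_le_mul_of_nonneg_left (hD k idx) (by positivity :
            (0:ℝ) ≤ 1 / (k.factorial : ℝ)))
          (mul_le_mul_of_nonneg_left (hD l idx') (by positivity :
            (0:ℝ) ≤ 1 / (l.factorial : ℝ)))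
          (by positivity) (by positivity)
        calc 1 / (k.factorial : ℝ) * |Dc k idx| * (1 / (l.factorial : ℝ) * |Dc l idx'|)
            ≤ (1 / (k.factorial : ℝ) * (γ ^ k * C)) * (1 / (l.factorial : ℝ) * (γ ^ l * C)) :=
              this
          _ = 1 / (k.factorial : ℝ) * (1 / (l.factorial : ℝ)) * (γ ^ k * C) * (γ ^ l * C) := by
              ring
    _ = γ ^ (k + l) * C ^ 2 / ((k.factorial : ℝ) * l.factorial)
          * ∫ α, (Smf αs Finset.univ α) ^ (k + l) ∂mu αs r := by
        have e1 : ∀ α : Fin m → ℝ, (Smf αs Finset.univ α) ^ (k + l)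
            = ∑ idx : Fin k → Fin m, ∑ idx' : Fin l → Fin m,
                (∏ j, (α (idx j) - αs (idx j))) * ∏ j, (α (idx' j) - αs (idx' j)) := by
          intro α
          rw [pow_add]
          rw [show Smf αs Finset.univ α = ∑ i, (α i - αs i) from rfl]
          rw [Fintype.sum_pow (fun i => α i - αs i) k, Fintype.sum_pow (fun i => α i - αs i) l,
            Finset.sum_mul_sum]
        rw [integral_congr_ae (Filter.Eventually.of_forall e1)]
        rw [integral_finset_sum _ fun idx _ => integrable_finset_sum _ fun idx' _ =>
          hintPP idx idx']
        rw [Finset.mul_sum]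
        refine Finset.sum_congr rfl fun idx _ => ?_
        rw [integral_finset_sum _ fun idx' _ => hintPP idx idx', Finset.mul_sum]
        refine Finset.sum_congr rfl fun idx' _ => ?_
        ring

lemma acoef_pointwise_bound {γ C : ℝ} (hγ : 0 ≤ γ) (hC : 0 ≤ C) {r : ℝ} (hr : 0 < r)
    (Dc : (k : ℕ) → (Fin k → Fin m) → ℝ)
    (hD : ∀ (k : ℕ) (idx : Fin k → Fin m), |Dc k idx| ≤ γ ^ k * C) (k : ℕ)
    {α : Fin m → ℝ} (hα : ∀ i, |α i - αs i| ≤ r) :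
    |acoef αs Dc k α| ≤ C * (γ * ((m : ℝ) * r)) ^ k / k.factorial := by
  have habs : |acoef αs Dc k α| ≤ (1 / (k.factorial : ℝ)) *
      ∑ idx : Fin k → Fin m, (γ ^ k * C) * ∏ j, |α (idx j) - αs (idx j)| := by
    rw [acoef, abs_mul, abs_of_pos (by positivity : (0:ℝ) < 1 / (k.factorial : ℝ))]
    refine mul_le_mul_of_nonneg_left ?_ (by positivity)
    refine (Finset.abs_sum_le_sum_abs _ _).trans ?_
    refine Finset.sum_le_sum fun idx _ => ?_
    rw [abs_mul, Finset.abs_prod]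
    exact mul_le_mul_of_nonneg_right (hD k idx)
      (Finset.prod_nonneg fun j _ => abs_nonneg _)
  refine habs.trans ?_
  have hsum : ∑ idx : Fin k → Fin m, (γ ^ k * C) * ∏ j, |α (idx j) - αs (idx j)|
      = (γ ^ k * C) * (∑ i, |α i - αs i|) ^ k := by
    rw [← Finset.mul_sum, Fintype.sum_pow (fun i => |α i - αs i|) k]
  rw [hsum]
  have hle : (∑ i, |α i - αs i|) ^ k ≤ ((m : ℝ) * r) ^ k := by
    refine pow_le_pow_left₀ (Finset.sum_nonneg fun i _ => abs_nonneg _) ?_ k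
    calc ∑ i, |α i - αs i| ≤ ∑ _i : Fin m, r := Finset.sum_le_sum fun i _ => hα i
      _ = (m : ℝ) * r := by rw [Finset.sum_const, Finset.card_univ, Fintype.card_fin,
        nsmul_eq_mul]
  calc (1 / (k.factorial : ℝ)) * ((γ ^ k * C) * (∑ i, |α i - αs i|) ^ k)
      ≤ (1 / (k.factorial : ℝ)) * ((γ ^ k * C) * ((m : ℝ) * r) ^ k) := by
        refine mul_le_mul_of_nonneg_left (mul_le_mul_of_nonneg_left hle ?_) ?_
        · positivity
        · positivity
    _ = C * (γ * ((m : ℝ) * r)) ^ k / k.factorial := by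
        rw [mul_pow]; field_simp; ring

lemma factorial_add_le {K s : ℕ} : (K.factorial : ℝ) * s.factorial ≤ (K + s).factorial := by
  have := Nat.factorial_mul_factorial_dvd_factorial_add K s
  exact_mod_cast Nat.cast_le.mpr (Nat.le_of_dvd (Nat.factorial_pos _) this)

/-- the purely arithmetic tail-sum bound -/
lemma final_sum_bound (γ C σ2 : ℝ) (hγ : 0 ≤ γ) (hC : 0 ≤ C) (hσ : 0 ≤ σ2) (T : ℕ → ℝ)
    (hT0 : ∀ n, ¬ Even n → T n = 0) (hTn : ∀ n, 0 ≤ T n)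
    (hTb : ∀ p, T (2 * p) ≤ ((2 * p).factorial : ℝ) / (2 ^ p * p.factorial) * σ2 ^ p)
    (K : ℕ) (N : ℕ) :
    ∑ j ∈ Finset.range N, ∑ j' ∈ Finset.range N,
        γ ^ ((j + K) + (j' + K)) * C ^ 2 / (((j + K).factorial : ℝ) * (j' + K).factorial)
          * T ((j + K) + (j' + K))
      ≤ (2 * γ ^ 2 * σ2) ^ K * (C ^ 2 / (K.factorial : ℝ)) * Real.exp (2 * γ ^ 2 * σ2) := by
  set X : ℝ := 2 * γ ^ 2 * σ2 with hX
  have hXnn : 0 ≤ X := by positivity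
  set F : ℕ × ℕ → ℝ := fun jj =>
    γ ^ ((jj.1 + K) + (jj.2 + K)) * C ^ 2
      / (((jj.1 + K).factorial : ℝ) * (jj.2 + K).factorial) * T ((jj.1 + K) + (jj.2 + K))
    with hF
  have hFnn : ∀ jj : ℕ × ℕ, 0 ≤ F jj := by
    intro jj
    have := hTn ((jj.1 + K) + (jj.2 + K))
    positivity
  -- inner sum over an antidiagonal
  have hinner : ∀ s : ℕ, ∑ jj ∈ Finset.HasAntidiagonal.antidiagonal (2 * s), F jj
      ≤ C ^ 2 * X ^ (K + s) / ((K + s).factorial : ℝ) := by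
    intro s
    set p : ℕ := K + s with hp
    have hterm : ∀ jj ∈ Finset.HasAntidiagonal.antidiagonal (2 * s),
        F jj ≤ γ ^ (2 * p) * C ^ 2 * (((2 * p).factorial : ℝ) / (2 ^ p * p.factorial) * σ2 ^ p)
          * (((2 * p).choose (jj.1 + K) : ℝ) / ((2 * p).factorial : ℝ)) := by
      intro jj hjj
      have hsum : jj.1 + jj.2 = 2 * s := Finset.HasAntidiagonal.mem_antidiagonal.mp hjj
      have hidx : (jj.1 + K) + (jj.2 + K) = 2 * p := by omega
      have hle1 : jj.1 + K ≤ 2 * p := by omega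
      have hfaceq : (((2 * p).choose (jj.1 + K) : ℝ))
          * ((jj.1 + K).factorial : ℝ) * ((jj.2 + K).factorial : ℝ)
          = ((2 * p).factorial : ℝ) := by
        have h3 := Nat.choose_mul_factorial_mul_factorial hle1
        have h4 : 2 * p - (jj.1 + K) = jj.2 + K := by omega
        rw [h4] at h3
        exact_mod_cast congrArg (Nat.cast (R := ℝ)) h3
      rw [hF]
      simp only []
      rw [hidx]
      have hTle := hTb p
      have hcoef : (0:ℝ) ≤ γ ^ (2 * p) * C ^ 2
          / (((jj.1 + K).factorial : ℝ) * (jj.2 + K).factorial) := by positivity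
      refine (mul_le_mul_of_nonneg_left hTle hcoef).trans (le_of_eq ?_)
      have hne1 : ((jj.1 + K).factorial : ℝ) ≠ 0 := by positivity
      have hne2 : ((jj.2 + K).factorial : ℝ) ≠ 0 := by positivity
      have hne3 : ((2 * p).factorial : ℝ) ≠ 0 := by positivity
      field_simp
      linear_combination (-(γ ^ (2 * p) * C ^ 2 * σ2 ^ p)) * hfaceq
    refine (Finset.sum_le_sum hterm).trans ?_
    rw [← Finset.mul_sum]
    -- bound the sum of binomial coefficients
    have hbin : ∑ jj ∈ Finset.HasAntidiagonal.antidiagonal (2 * s), (((2 * p).choose (jj.1 + K) : ℝ)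
        / ((2 * p).factorial : ℝ))
        ≤ (4 : ℝ) ^ p / ((2 * p).factorial : ℝ) := by
      rw [← Finset.sum_div]
      refine div_le_div_of_nonneg_right ?_ (by positivity) |>.trans (le_of_eq rfl)
      have hN : ∑ jj ∈ Finset.HasAntidiagonal.antidiagonal (2 * s), (2 * p).choose (jj.1 + K)
          ≤ 2 ^ (2 * p) := by
        rw [Finset.Nat.sum_antidiagonal_eq_sum_range_succ_mk]
        have hemb : ∑ k ∈ Finset.range (2 * s + 1), (2 * p).choose (k + K)
            = ∑ i ∈ (Finset.range (2 * s + 1)).map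
                ⟨fun x => x + K, add_left_injective K⟩, (2 * p).choose i := by
          rw [Finset.sum_map]
          rfl
        rw [hemb]
        have hsubset : (Finset.range (2 * s + 1)).map
            ⟨fun x => x + K, add_left_injective K⟩ ⊆ Finset.range (2 * p + 1) := by
          intro x hx
          obtain ⟨k, hk, rfl⟩ := Finset.mem_map.mp hx
          have := Finset.mem_range.mp hk
          refine Finset.mem_range.mpr ?_
          show k + K < 2 * p + 1
          omega
        calc ∑ i ∈ (Finset.range (2 * s + 1)).map
              ⟨fun x => x + K, add_left_injective K⟩, (2 * p).choose i
            ≤ ∑ i ∈ Finset.range (2 * p + 1), (2 * p).choose i :=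
              Finset.sum_le_sum_of_subset hsubset
          _ = 2 ^ (2 * p) := Nat.sum_range_choose (2 * p)
      calc (∑ jj ∈ Finset.HasAntidiagonal.antidiagonal (2 * s), (((2 * p).choose (jj.1 + K) : ℝ)))
          = ((∑ jj ∈ Finset.HasAntidiagonal.antidiagonal (2 * s), (2 * p).choose (jj.1 + K) : ℕ) : ℝ) := by
            push_cast; rfl
        _ ≤ ((2 ^ (2 * p) : ℕ) : ℝ) := by exact_mod_cast hN
        _ = (4 : ℝ) ^ p := by
            rw [show (4:ℝ) = 2 ^ 2 by norm_num, ← pow_mul]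
            push_cast
            ring
    have hA : (0:ℝ) ≤ γ ^ (2 * p) * C ^ 2
        * (((2 * p).factorial : ℝ) / (2 ^ p * p.factorial) * σ2 ^ p) := by positivity
    refine (mul_le_mul_of_nonneg_left hbin hA).trans (le_of_eq ?_)
    have hg : γ ^ (2 * p) = (γ ^ 2) ^ p := by rw [← pow_mul]
    have hXp : X ^ p = 2 ^ p * (γ ^ 2) ^ p * σ2 ^ p := by
      rw [hX, show (2 * γ ^ 2 * σ2) ^ p = 2 ^ p * (γ ^ 2) ^ p * σ2 ^ p by
        rw [← mul_pow, ← mul_pow]]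
    have h4 : (4:ℝ) ^ p = 2 ^ p * 2 ^ p := by
      rw [show (4:ℝ) = 2 * 2 by norm_num, mul_pow]
    have hne3 : ((2 * p).factorial : ℝ) ≠ 0 := by positivity
    have hnep : ((p.factorial : ℝ)) ≠ 0 := by positivity
    rw [hp] at hXp ⊢
    rw [hg, hXp, h4]
    field_simp
    ring
  -- now assemble the outer double sum
  have houter : ∑ j ∈ Finset.range N, ∑ j' ∈ Finset.range N,
      γ ^ ((j + K) + (j' + K)) * C ^ 2 / (((j + K).factorial : ℝ) * (j' + K).factorial)
        * T ((j + K) + (j' + K))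
      = ∑ jj ∈ Finset.range N ×ˢ Finset.range N, F jj := by
    rw [Finset.sum_product]
  rw [houter]
  have hsub : Finset.range N ×ˢ Finset.range N
      ⊆ (Finset.range (2 * N)).biUnion (fun n => Finset.HasAntidiagonal.antidiagonal n) := by
    intro jj hjj
    rw [Finset.mem_product] at hjj
    refine Finset.mem_biUnion.mpr ⟨jj.1 + jj.2, ?_, Finset.HasAntidiagonal.mem_antidiagonal.mpr rfl⟩
    have h1 := Finset.mem_range.mp hjj.1
    have h2 := Finset.mem_range.mp hjj.2
    exact Finset.mem_range.mpr (by omega)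
  have hdisj : (↑(Finset.range (2 * N)) : Set ℕ).PairwiseDisjoint
      (fun n => Finset.HasAntidiagonal.antidiagonal n) := by
    intro a _ b _ hab
    refine Finset.disjoint_left.mpr fun x hx1 hx2 => hab ?_
    rw [← Finset.HasAntidiagonal.mem_antidiagonal.mp hx1, ← Finset.HasAntidiagonal.mem_antidiagonal.mp hx2]
  have hzero : ∀ n, ¬ Even n → ∑ jj ∈ Finset.HasAntidiagonal.antidiagonal n, F jj = 0 := by
    intro n hn
    refine Finset.sum_eq_zero fun jj hjj => ?_
    have hsum : jj.1 + jj.2 = n := Finset.HasAntidiagonal.mem_antidiagonal.mp hjj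
    have : ¬ Even ((jj.1 + K) + (jj.2 + K)) := by
      intro he
      refine hn ?_
      have : (jj.1 + K) + (jj.2 + K) = n + 2 * K := by omega
      rw [this] at he
      rcases he with ⟨w, hw⟩
      exact ⟨w - K, by omega⟩
    rw [hF]
    simp only []
    rw [hT0 _ this, mul_zero]
  calc ∑ jj ∈ Finset.range N ×ˢ Finset.range N, F jj
      ≤ ∑ jj ∈ (Finset.range (2 * N)).biUnion (fun n => Finset.HasAntidiagonal.antidiagonal n), F jj :=
        Finset.sum_le_sum_of_subset_of_nonneg hsub (fun jj _ _ => hFnn jj)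
    _ = ∑ n ∈ Finset.range (2 * N), ∑ jj ∈ Finset.HasAntidiagonal.antidiagonal n, F jj :=
        Finset.sum_biUnion hdisj
    _ = ∑ s ∈ Finset.range N, ∑ jj ∈ Finset.HasAntidiagonal.antidiagonal (2 * s), F jj :=
        sum_even_range _ hzero N
    _ ≤ ∑ s ∈ Finset.range N, C ^ 2 * X ^ (K + s) / ((K + s).factorial : ℝ) :=
        Finset.sum_le_sum fun s _ => hinner s
    _ ≤ ∑ s ∈ Finset.range N, C ^ 2 * X ^ K / (K.factorial : ℝ) * (X ^ s / s.factorial) := by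
        refine Finset.sum_le_sum fun s _ => ?_
        have h1 : X ^ (K + s) = X ^ K * X ^ s := pow_add X K s
        have h2 : (0:ℝ) < (K.factorial : ℝ) * s.factorial := by positivity
        have h3 : ((K.factorial : ℝ) * s.factorial) ≤ ((K + s).factorial : ℝ) :=
          factorial_add_le
        calc C ^ 2 * X ^ (K + s) / ((K + s).factorial : ℝ)
            ≤ C ^ 2 * X ^ (K + s) / ((K.factorial : ℝ) * s.factorial) :=
              div_le_div_of_nonneg_left (by positivity) h2 h3 |>.trans (le_of_eq rfl)
          _ = C ^ 2 * X ^ K / (K.factorial : ℝ) * (X ^ s / s.factorial) := by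
              rw [h1]; field_simp
    _ = C ^ 2 * X ^ K / (K.factorial : ℝ) * ∑ s ∈ Finset.range N, (X ^ s / s.factorial) := by
        rw [Finset.mul_sum]
    _ ≤ C ^ 2 * X ^ K / (K.factorial : ℝ) * Real.exp X := by
        refine mul_le_mul_of_nonneg_left ?_ (by positivity)
        exact Real.sum_le_exp_of_nonneg hXnn N
    _ = (2 * γ ^ 2 * σ2) ^ K * (C ^ 2 / (K.factorial : ℝ)) * Real.exp (2 * γ ^ 2 * σ2) := by
        rw [← hX]
        ring

end TMSE
end


open TMSE

/-- Mean square error of the order-`κ` Taylor surrogate: if `f` is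
infinitely differentiable, its mixed partial derivatives at `α*` of every order `k`
(encoded via the `k`-th Fréchet derivative evaluated on coordinate directions) are
bounded in absolute value by `γ^k C`, and `f` agrees with its Taylor series at `α*` on
the hypercube `V(α*, r)`, then for `α` uniform on `V(α*, r)` (product of uniform
distributions on the intervals `[α*_i − r, α*_i + r]`),
`E[(f(α) − T_κ f(α))²] ≤ (2γ²mr²/3)^{κ+1} (C²/(κ+1)!) e^{2γ²mr²/3}`. -/
theorem taylor_surrogate_mean_square_error (m κ : ℕ) (hm : 1 ≤ m)
    (αstar : Fin m → ℝ) (r γ C : ℝ) (hr : 0 < r) (hγ : 0 ≤ γ) (hC : 0 ≤ C)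
    (f : (Fin m → ℝ) → ℝ) (hf : ContDiff ℝ ∞ f)
    (hderiv : ∀ (k : ℕ) (idx : Fin k → Fin m),
      |iteratedFDeriv ℝ k f αstar (fun j => Pi.single (idx j) (1 : ℝ))| ≤ γ ^ k * C)
    (htaylor : ∀ α : Fin m → ℝ, (∀ i, |α i - αstar i| ≤ r) →
      f α = ∑' k : ℕ, (1 / (k.factorial : ℝ)) *
          ∑ idx : Fin k → Fin m,
            iteratedFDeriv ℝ k f αstar (fun j => Pi.single (idx j) (1 : ℝ)) *
              ∏ j, (α (idx j) - αstar (idx j))) :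
    ∫ α, (f α - ∑ k ∈ Finset.range (κ + 1), (1 / (k.factorial : ℝ)) *
            ∑ idx : Fin k → Fin m,
              iteratedFDeriv ℝ k f αstar (fun j => Pi.single (idx j) (1 : ℝ)) *
                ∏ j, (α (idx j) - αstar (idx j))) ^ 2
          ∂(Measure.pi fun i =>
            (ENNReal.ofReal (2 * r))⁻¹ •
              volume.restrict (Set.Icc (αstar i - r) (αstar i + r)))
      ≤ (2 * γ ^ 2 * (m : ℝ) * r ^ 2 / 3) ^ (κ + 1) * (C ^ 2 / ((κ + 1).factorial : ℝ)) *
          Real.exp (2 * γ ^ 2 * (m : ℝ) * r ^ 2 / 3) := by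
  haveI : Fact (0 < r) := ⟨hr⟩
  haveI := mu_prob αstar (r := r)
  set Dc : (k : ℕ) → (Fin k → Fin m) → ℝ :=
    fun k idx => iteratedFDeriv ℝ k f αstar (fun j => Pi.single (idx j) (1 : ℝ)) with hDc
  set K : ℕ := κ + 1 with hK
  set a : ℕ → (Fin m → ℝ) → ℝ := fun k => acoef αstar Dc k with ha
  -- rewrite the measure
  rw [show (Measure.pi fun i =>
      (ENNReal.ofReal (2 * r))⁻¹ •
        volume.restrict (Set.Icc (αstar i - r) (αstar i + r))) = mu αstar r from rfl]
  -- the summable majorant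
  set b : ℕ → ℝ := fun k => C * (γ * ((m : ℝ) * r)) ^ k / k.factorial with hb
  have hbnn : ∀ k, 0 ≤ b k := fun k => by rw [hb]; positivity
  have hbsum : Summable b := by
    have h1 := (Real.summable_pow_div_factorial (γ * ((m : ℝ) * r))).mul_left C
    refine h1.congr fun k => ?_
    show C * ((γ * ((m : ℝ) * r)) ^ k / k.factorial) = C * (γ * ((m : ℝ) * r)) ^ k / k.factorial
    rw [mul_div_assoc]
  set B0 : ℝ := ∑' k, b k with hB0
  have hB0nn : 0 ≤ B0 := tsum_nonneg hbnn
  set tail : (Fin m → ℝ) → ℝ := fun α => ∑' j, a (j + K) α with htail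
  -- pointwise facts on the cube
  have hcube : ∀ α : Fin m → ℝ, (∀ i, |α i - αstar i| ≤ r) →
      (∀ k, |a k α| ≤ b k) ∧ Summable (fun k => a k α) ∧
        f α - ∑ k ∈ Finset.range K, a k α = tail α := by
    intro α hα
    have hpt : ∀ k, |a k α| ≤ b k := fun k =>
      acoef_pointwise_bound αstar hγ hC hr Dc hderiv k hα
    have hsummA : Summable (fun k => a k α) :=
      Summable.of_norm_bounded hbsum fun k => by
        rw [Real.norm_eq_abs]; exact hpt k
    refine ⟨hpt, hsummA, ?_⟩
    have hfeq : f α = ∑' k, a k α := htaylor α hα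
    have hsplit := Summable.sum_add_tsum_nat_add K hsummA
    rw [htail, hfeq, ← hsplit]
    ring
  -- the integrand is a.e. equal to tail ^ 2
  have h1 : ∫ α, (f α - ∑ k ∈ Finset.range (κ + 1), (1 / (k.factorial : ℝ)) *
        ∑ idx : Fin k → Fin m,
          iteratedFDeriv ℝ k f αstar (fun j => Pi.single (idx j) (1 : ℝ)) *
            ∏ j, (α (idx j) - αstar (idx j))) ^ 2 ∂mu αstar r
      = ∫ α, (tail α) ^ 2 ∂mu αstar r := by
    refine integral_congr_ae ?_
    filter_upwards [ae_cube αstar hr] with α hα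
    have := (hcube α hα).2.2
    show (f α - ∑ k ∈ Finset.range K, a k α) ^ 2 = (tail α) ^ 2
    rw [this]
  rw [h1]
  -- moments of the sum
  set T : ℕ → ℝ := fun n => ∫ α, (Smf αstar Finset.univ α) ^ n ∂mu αstar r with hT
  have hmom := moment_bound αstar (r := r) hr Finset.univ
  have hT0 : ∀ n, ¬ Even n → T n = 0 := fun n hn => (hmom n).1 hn
  have hTn : ∀ n, 0 ≤ T n := fun n => (hmom n).2.1
  have hTb : ∀ p, T (2 * p) ≤ ((2 * p).factorial : ℝ) / (2 ^ p * p.factorial)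
      * ((m : ℝ) * r ^ 2 / 3) ^ p := by
    intro p
    have := (hmom (2 * p)).2.2 p rfl
    rwa [Finset.card_univ, Fintype.card_fin] at this
  -- the per-N bound
  have hN : ∀ N : ℕ, ∫ α, (∑ j ∈ Finset.range N, a (j + K) α) ^ 2 ∂mu αstar r
      ≤ (2 * γ ^ 2 * (m : ℝ) * r ^ 2 / 3) ^ K * (C ^ 2 / (K.factorial : ℝ)) *
          Real.exp (2 * γ ^ 2 * (m : ℝ) * r ^ 2 / 3) := by
    intro N
    have hintaa : ∀ k l : ℕ, Integrable (fun α => a k α * a l α) (mu αstar r) :=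
      fun k l => integrable_cont αstar hr
        ((acoef_continuous αstar Dc k).mul (acoef_continuous αstar Dc l))
    have hexp : ∀ α : Fin m → ℝ, (∑ j ∈ Finset.range N, a (j + K) α) ^ 2
        = ∑ j ∈ Finset.range N, ∑ j' ∈ Finset.range N, a (j + K) α * a (j' + K) α := by
      intro α
      rw [sq, Finset.sum_mul_sum]
    calc ∫ α, (∑ j ∈ Finset.range N, a (j + K) α) ^ 2 ∂mu αstar r
        = ∑ j ∈ Finset.range N, ∑ j' ∈ Finset.range N,
            ∫ α, a (j + K) α * a (j' + K) α ∂mu αstar r := by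
          rw [integral_congr_ae (Filter.Eventually.of_forall hexp)]
          rw [integral_finset_sum _ fun j _ => integrable_finset_sum _ fun j' _ =>
            hintaa (j + K) (j' + K)]
          exact Finset.sum_congr rfl fun j _ =>
            integral_finset_sum _ fun j' _ => hintaa (j + K) (j' + K)
      _ ≤ ∑ j ∈ Finset.range N, ∑ j' ∈ Finset.range N,
            γ ^ ((j + K) + (j' + K)) * C ^ 2
              / (((j + K).factorial : ℝ) * (j' + K).factorial) * T ((j + K) + (j' + K)) :=
          Finset.sum_le_sum fun j _ => Finset.sum_le_sum fun j' _ =>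
            acoef_pair_bound αstar hr hγ hC Dc hderiv (j + K) (j' + K)
      _ ≤ (2 * γ ^ 2 * ((m : ℝ) * r ^ 2 / 3)) ^ K * (C ^ 2 / (K.factorial : ℝ)) *
            Real.exp (2 * γ ^ 2 * ((m : ℝ) * r ^ 2 / 3)) :=
          final_sum_bound γ C ((m : ℝ) * r ^ 2 / 3) hγ hC (by positivity) T hT0 hTn hTb K N
      _ = (2 * γ ^ 2 * (m : ℝ) * r ^ 2 / 3) ^ K * (C ^ 2 / (K.factorial : ℝ)) *
            Real.exp (2 * γ ^ 2 * (m : ℝ) * r ^ 2 / 3) := by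
          rw [show 2 * γ ^ 2 * ((m : ℝ) * r ^ 2 / 3) = 2 * γ ^ 2 * (m : ℝ) * r ^ 2 / 3 by ring]
  -- dominated convergence
  have hmeas : ∀ N : ℕ, AEStronglyMeasurable
      (fun α => (∑ j ∈ Finset.range N, a (j + K) α) ^ 2) (mu αstar r) := by
    intro N
    exact ((continuous_finset_sum _ fun j _ => acoef_continuous αstar Dc (j + K)).pow
      2).aestronglyMeasurable
  have hboundInt : Integrable (fun _ : Fin m → ℝ => B0 ^ 2) (mu αstar r) :=
    integrable_const _
  have hbound : ∀ N : ℕ, ∀ᵐ α ∂mu αstar r,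
      ‖(∑ j ∈ Finset.range N, a (j + K) α) ^ 2‖ ≤ B0 ^ 2 := by
    intro N
    filter_upwards [ae_cube αstar hr] with α hα
    obtain ⟨hpt, hsummA, _⟩ := hcube α hα
    have habs : |∑ j ∈ Finset.range N, a (j + K) α| ≤ B0 := by
      refine (Finset.abs_sum_le_sum_abs _ _).trans ?_
      have hshift : Summable (fun j => b (j + K)) := (summable_nat_add_iff (f := b) K).mpr hbsum
      calc ∑ j ∈ Finset.range N, |a (j + K) α| ≤ ∑ j ∈ Finset.range N, b (j + K) :=
            Finset.sum_le_sum fun j _ => hpt (j + K)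
        _ ≤ ∑' j, b (j + K) := Summable.sum_le_tsum _ (fun j _ => hbnn (j + K)) hshift
        _ ≤ B0 := by
            rw [hB0, ← Summable.sum_add_tsum_nat_add K hbsum]
            have : 0 ≤ ∑ i ∈ Finset.range K, b i :=
              Finset.sum_nonneg fun i _ => hbnn i
            linarith
    rw [Real.norm_eq_abs, abs_pow]
    exact pow_le_pow_left₀ (abs_nonneg _) habs 2
  have hlim : ∀ᵐ α ∂mu αstar r, Filter.Tendsto
      (fun N => (∑ j ∈ Finset.range N, a (j + K) α) ^ 2) Filter.atTop
      (nhds ((tail α) ^ 2)) := by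
    filter_upwards [ae_cube αstar hr] with α hα
    obtain ⟨_, hsummA, _⟩ := hcube α hα
    have hshift : Summable (fun j => a (j + K) α) :=
      (summable_nat_add_iff (f := fun k => a k α) K).mpr hsummA
    have h2 := hshift.hasSum.tendsto_sum_nat
    exact h2.pow 2
  have htendsto := tendsto_integral_of_dominated_convergence (μ := mu αstar r)
    (F := fun N α => (∑ j ∈ Finset.range N, a (j + K) α) ^ 2)
    (f := fun α => (tail α) ^ 2) (fun _ => B0 ^ 2) hmeas hboundInt hbound hlim
  exact le_of_tendsto htendsto (Filter.Eventually.of_forall hN)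
end

section
/- For all natural numbers m and κ with 1 ≤ κ ≤ m − 1, the partial sum of binomial coefficients satisfies Σ_{k=0}^{κ} C(m + k − 1, k) ≤ (e (m + κ − 1) / κ)^κ, where e is Euler's number and C(n, k) denotes the binomial coefficient. -/
/-- For all natural numbers `m` and `κ` with `1 ≤ κ ≤ m − 1`, the partial
sum of binomial coefficients satisfies
`Σ_{k=0}^{κ} C(m + k − 1, k) ≤ (e (m + κ − 1) / κ)^κ`. -/
theorem sum_choose_multiset_le (m κ : ℕ) (hκ : 1 ≤ κ) (hκm : κ + 1 ≤ m) :
    ((∑ k ∈ Finset.range (κ + 1), (m + k - 1).choose k : ℕ) : ℝ)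
      ≤ (Real.exp 1 * ((m : ℝ) + (κ : ℝ) - 1) / (κ : ℝ)) ^ κ := by
  have hm1 : 1 ≤ m := by omega
  set n : ℕ := m + κ - 1 with hn
  have hκn : κ ≤ n := by omega
  have hcast : (m : ℝ) + (κ : ℝ) - 1 = (n : ℝ) := by
    rw [hn, Nat.cast_sub (by omega)]
    push_cast; ring
  rw [hcast]
  have hκpos : (0:ℝ) < κ := by exact_mod_cast hκ
  have hnpos : (0:ℝ) < n := lt_of_lt_of_le hκpos (by exact_mod_cast hκn)
  have hq1 : (1:ℝ) ≤ (n:ℝ)/κ := by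
    rw [le_div_iff₀ hκpos, one_mul]; exact_mod_cast hκn
  have hr0 : (0:ℝ) ≤ (κ:ℝ)/n := by positivity
  calc ((∑ k ∈ Finset.range (κ + 1), (m + k - 1).choose k : ℕ) : ℝ)
      ≤ ∑ k ∈ Finset.range (κ+1), ((n.choose k : ℕ) : ℝ) := by
        push_cast
        apply Finset.sum_le_sum
        intro k hk
        have hk' : k ≤ κ := Nat.lt_succ_iff.mp (Finset.mem_range.mp hk)
        exact_mod_cast Nat.choose_le_choose k (by omega : m + k - 1 ≤ n)
    _ ≤ ∑ k ∈ Finset.range (κ+1),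
          ((n:ℝ)/κ)^κ * ((n.choose k : ℝ) * ((κ:ℝ)/n)^k) := by
        apply Finset.sum_le_sum
        intro k hk
        have hk' : k ≤ κ := Nat.lt_succ_iff.mp (Finset.mem_range.mp hk)
        have hqne : ((n:ℝ)/κ) ≠ 0 := by positivity
        have key : ((n:ℝ)/κ)^κ * ((κ:ℝ)/n)^k = ((n:ℝ)/κ)^(κ - k) := by
          have h1 : ((κ:ℝ)/n) = ((n:ℝ)/κ)⁻¹ := by rw [inv_div]
          rw [h1, inv_pow, pow_sub₀ _ hqne hk', div_eq_mul_inv]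
        have h1 : (1:ℝ) ≤ ((n:ℝ)/κ)^κ * ((κ:ℝ)/n)^k := by
          rw [key]
          calc (1:ℝ) = 1 ^ (κ - k) := (one_pow _).symm
            _ ≤ ((n:ℝ)/κ) ^ (κ - k) := pow_le_pow_left₀ zero_le_one hq1 _
        calc ((n.choose k : ℕ) : ℝ) = 1 * (n.choose k : ℝ) := by ring
          _ ≤ (((n:ℝ)/κ)^κ * ((κ:ℝ)/n)^k) * (n.choose k : ℝ) :=
              mul_le_mul_of_nonneg_right h1 (by positivity)
          _ = ((n:ℝ)/κ)^κ * ((n.choose k : ℝ) * ((κ:ℝ)/n)^k) := by ring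
    _ = ((n:ℝ)/κ)^κ * ∑ k ∈ Finset.range (κ+1),
          (n.choose k : ℝ) * ((κ:ℝ)/n)^k := by rw [Finset.mul_sum]
    _ ≤ ((n:ℝ)/κ)^κ * ∑ k ∈ Finset.range (n+1),
          (n.choose k : ℝ) * ((κ:ℝ)/n)^k := by
        apply mul_le_mul_of_nonneg_left _ (by positivity)
        apply Finset.sum_le_sum_of_subset_of_nonneg
        · exact Finset.range_subset_range.mpr (by omega)
        · intro k _ _; positivity
    _ = ((n:ℝ)/κ)^κ * (1 + (κ:ℝ)/n)^n := by
        rw [add_comm (1:ℝ) ((κ:ℝ)/n), add_pow]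
        congr 1
        apply Finset.sum_congr rfl
        intro k _
        simp [one_pow]
        ring
    _ ≤ ((n:ℝ)/κ)^κ * (Real.exp ((κ:ℝ)/n))^n := by
        apply mul_le_mul_of_nonneg_left _ (by positivity)
        apply pow_le_pow_left₀ (by positivity)
        linarith [Real.add_one_le_exp ((κ:ℝ)/n)]
    _ = ((n:ℝ)/κ)^κ * (Real.exp 1)^κ := by
        congr 1
        rw [← Real.exp_nat_mul, ← Real.exp_nat_mul]
        congr 1
        field_simp
    _ = (Real.exp 1 * (n:ℝ) / κ)^κ := by rw [← mul_pow]; ring_nf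
end

section
/- Let N ≥ 1 and let ρ, O, V_1, …, V_m, H_1, …, H_m be N × N complex matrices such that ρ is positive semidefinite with trace 1, O is Hermitian, each H_l is Hermitian, and each V_l is unitary. For α ∈ ℝ^m define U(α) = V_1 exp(−i α_1 H_1) · V_2 exp(−i α_2 H_2) ⋯ V_m exp(−i α_m H_m) and f(α) = Tr(ρ · U(α)† O U(α)) (a real-valued function of α). Then for every multi-index (k_1, …, k_m) ∈ ℕ^m with k_1 + ⋯ + k_m = k and every α ∈ ℝ^m, the mixed partial derivative satisfies |(∂^{k_1}/∂α_1^{k_1}) ⋯ (∂^{k_m}/∂α_m^{k_m}) f(α)| ≤ ‖O‖ · ∏_{l=1}^{m} (2 ‖H_l‖)^{k_l}, and consequently |∂^{(k_1,…,k_m)} f(α)| ≤ ‖O‖ · (2 max_l ‖H_l‖)^k. -/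
open scoped Matrix ComplexOrder

/-- The spectral norm (ℓ² → ℓ² operator norm) of a square complex matrix. -/
noncomputable def specNorm {N : ℕ} (A : Matrix (Fin N) (Fin N) ℂ) : ℝ :=
  ‖Matrix.toEuclideanCLM (𝕜 := ℂ) A‖

open scoped Matrix.Norms.L2Operator
open NormedSpace


variable {N m : ℕ}

noncomputable def Bgen (Hl : Matrix (Fin N) (Fin N) ℂ) : Matrix (Fin N) (Fin N) ℂ :=
  (-Complex.I) • Hl

noncomputable def Gfac (Vl Hl : Matrix (Fin N) (Fin N) ℂ) (n : ℕ) (t : ℝ) :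
    Matrix (Fin N) (Fin N) ℂ := Vl * Bgen Hl ^ n * exp (t • Bgen Hl)

lemma hasDerivAt_Gfac (Vl Hl : Matrix (Fin N) (Fin N) ℂ) (n : ℕ) (t : ℝ) :
    HasDerivAt (Gfac Vl Hl n) (Gfac Vl Hl (n + 1) t) t := by
  have h := (hasDerivAt_exp_smul_const (Bgen Hl) t).const_mul (Vl * Bgen Hl ^ n)
  have hc : Commute (Bgen Hl) (exp (t • Bgen Hl)) :=
    (((Commute.refl (Bgen Hl)).smul_right t)).exp_right
  have he : Gfac Vl Hl (n + 1) t = Vl * Bgen Hl ^ n * (exp (t • Bgen Hl) * Bgen Hl) := by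
    rw [Gfac, pow_succ, ← mul_assoc Vl, mul_assoc (Vl * Bgen Hl ^ n), hc.eq]
  rw [he]
  exact h

lemma contDiff_expPath (B : Matrix (Fin N) (Fin N) ℂ) (k : ℕ) :
    ContDiff ℝ k (fun t : ℝ => exp (t • B)) := by
  have hd : Differentiable ℝ (fun t : ℝ => exp (t • B)) :=
    fun t => (hasDerivAt_exp_smul_const B t).differentiableAt
  induction k with
  | zero => exact contDiff_zero.mpr hd.continuous
  | succ k ih =>
    have hcast : ((k + 1 : ℕ) : WithTop ℕ∞) = (k : ℕ) + 1 := by push_cast; rfl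
    rw [hcast, contDiff_succ_iff_deriv]
    refine ⟨hd, ?_, ?_⟩
    · intro h; simp at h
    · have hderiv : deriv (fun t : ℝ => exp (t • B)) = fun t => exp (t • B) * B :=
        funext fun t => (hasDerivAt_exp_smul_const B t).deriv
      rw [hderiv]; exact ih.mul contDiff_const

lemma contDiff_Gfac (Vl Hl : Matrix (Fin N) (Fin N) ℂ) (n : ℕ) (k : ℕ) :
    ContDiff ℝ k (Gfac Vl Hl n) :=
  contDiff_const.mul (contDiff_expPath (Bgen Hl) k)


variable (V H : Fin m → Matrix (Fin N) (Fin N) ℂ)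

noncomputable def PLf (L : List (Fin m)) (b : Fin m → ℕ) (α : Fin m → ℝ) :
    Matrix (Fin N) (Fin N) ℂ :=
  (L.map (fun l => Gfac (V l) (H l) (b l) (α l))).prod

noncomputable def Mfun (b : Fin m → ℕ) (α : Fin m → ℝ) : Matrix (Fin N) (Fin N) ℂ :=
  PLf V H (List.finRange m) b α

lemma PLf_congr {L : List (Fin m)} {b b' : Fin m → ℕ} {α α' : Fin m → ℝ}
    (hb : ∀ l ∈ L, b l = b' l) (hα : ∀ l ∈ L, α l = α' l) :
    PLf V H L b α = PLf V H L b' α' := by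
  unfold PLf
  congr 1
  apply List.map_congr_left
  intro l hl
  rw [hb l hl, hα l hl]

lemma PLf_cons (l : Fin m) (L : List (Fin m)) (b : Fin m → ℕ) (α : Fin m → ℝ) :
    PLf V H (l :: L) b α = Gfac (V l) (H l) (b l) (α l) * PLf V H L b α := by
  simp [PLf]

lemma contDiff_PLf (L : List (Fin m)) (b : Fin m → ℕ) (k : ℕ) :
    ContDiff ℝ k (fun α => PLf V H L b α) := by
  induction L with
  | nil => simpa [PLf] using contDiff_const (c := (1 : Matrix (Fin N) (Fin N) ℂ))
  | cons l L ih =>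
    simp only [PLf_cons]
    have hfac : ContDiff ℝ k (fun α : Fin m → ℝ => Gfac (V l) (H l) (b l) (α l)) := by
      have hproj : ContDiff ℝ k (fun α : Fin m → ℝ => α l) :=
        (ContinuousLinearMap.proj (R := ℝ) (φ := fun _ : Fin m => ℝ) l).contDiff
      exact (contDiff_Gfac (V l) (H l) (b l) k).comp hproj
    exact hfac.mul ih

lemma Mfun_split (l : Fin m) :
    ∃ L1 L2 : List (Fin m), l ∉ L1 ∧ l ∉ L2 ∧ ∀ b α,
      Mfun V H b α = PLf V H L1 b α * (Gfac (V l) (H l) (b l) (α l) * PLf V H L2 b α) := by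
  obtain ⟨L1, L2, hsplit⟩ := List.append_of_mem (List.mem_finRange l)
  have hnd : (L1 ++ l :: L2).Nodup := hsplit ▸ List.nodup_finRange m
  rw [List.nodup_append] at hnd
  obtain ⟨h1, h2, hdisj⟩ := hnd
  refine ⟨L1, L2, fun hl => hdisj l hl l List.mem_cons_self rfl, (List.nodup_cons.mp h2).1,
    fun b α => ?_⟩
  rw [Mfun, hsplit]
  unfold PLf
  rw [List.map_append, List.prod_append, List.map_cons, List.prod_cons]
noncomputable def esing (l : Fin m) : Fin m → ℝ := Pi.single l 1

lemma esing_ne {l l' : Fin m} (h : l' ≠ l) : esing l l' = 0 := Pi.single_eq_of_ne h 1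
lemma esing_eq (l : Fin m) : esing l l = 1 := Pi.single_eq_same l 1

noncomputable def incr (b : Fin m → ℕ) (l : Fin m) : Fin m → ℕ :=
  Function.update b l (b l + 1)

lemma hasDerivAt_Mfun_line (b : Fin m → ℕ) (y : Fin m → ℝ) (l : Fin m) (t : ℝ) :
    HasDerivAt (fun s : ℝ => Mfun V H b (y + s • esing l))
      (Mfun V H (incr b l) (y + t • esing l)) t := by
  obtain ⟨L1, L2, hl1, hl2, hsplit⟩ := Mfun_split V H l
  have harg : ∀ (s : ℝ) (l' : Fin m), l' ≠ l → (y + s • esing l) l' = y l' := by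
    intro s l' h
    simp [esing_ne h]
  have hargl : ∀ s : ℝ, (y + s • esing l) l = y l + s := by
    intro s; simp [esing_eq]
  have hfun : (fun s : ℝ => Mfun V H b (y + s • esing l))
      = fun s : ℝ => PLf V H L1 b y * (Gfac (V l) (H l) (b l) (y l + s) * PLf V H L2 b y) := by
    funext s
    rw [hsplit, hargl,
      PLf_congr V H (L := L1) (b' := b) (α' := y) (fun _ _ => rfl)
        (fun l' hl' => harg s l' (fun h : l' = l => hl1 (h ▸ hl'))),
      PLf_congr V H (L := L2) (b' := b) (α' := y) (fun _ _ => rfl)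
        (fun l' hl' => harg s l' (fun h : l' = l => hl2 (h ▸ hl')))]
  have hval : Mfun V H (incr b l) (y + t • esing l)
      = PLf V H L1 b y * (Gfac (V l) (H l) (b l + 1) (y l + t) * PLf V H L2 b y) := by
    rw [hsplit, hargl,
      PLf_congr V H (L := L1) (b := incr b l) (b' := b) (α' := y)
        (fun l' hl' => Function.update_of_ne (fun h : l' = l => hl1 (h ▸ hl')) _ _)
        (fun l' hl' => harg t l' (fun h : l' = l => hl1 (h ▸ hl'))),
      PLf_congr V H (L := L2) (b := incr b l) (b' := b) (α' := y)
        (fun l' hl' => Function.update_of_ne (fun h : l' = l => hl2 (h ▸ hl')) _ _)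
        (fun l' hl' => harg t l' (fun h : l' = l => hl2 (h ▸ hl'))),
      show incr b l l = b l + 1 from Function.update_self l _ b]
  rw [hfun, hval]
  have hG : HasDerivAt (fun s : ℝ => Gfac (V l) (H l) (b l) (y l + s))
      (Gfac (V l) (H l) (b l + 1) (y l + t)) t :=
    HasDerivAt.comp_const_add (y l) t (hasDerivAt_Gfac (V l) (H l) (b l) (y l + t))
  exact ((hG.mul_const (PLf V H L2 b y)).const_mul (PLf V H L1 b y))
noncomputable def ctCLM (N : ℕ) : Matrix (Fin N) (Fin N) ℂ →L[ℝ] Matrix (Fin N) (Fin N) ℂ :=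
  LinearMap.toContinuousLinearMap
    { toFun := fun A => Aᴴ
      map_add' := fun A B => Matrix.conjTranspose_add A B
      map_smul' := fun r A => by
        ext i j
        simp [Matrix.conjTranspose_apply, star_smul] }

@[simp] lemma ctCLM_apply (A : Matrix (Fin N) (Fin N) ℂ) : ctCLM N A = Aᴴ := rfl

noncomputable def trCLM (N : ℕ) : Matrix (Fin N) (Fin N) ℂ →L[ℝ] ℝ :=
  LinearMap.toContinuousLinearMap
    { toFun := fun A => (A.trace).re
      map_add' := fun A B => by simp
      map_smul' := fun r A => by simp [Matrix.trace_smul, Complex.smul_re] }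

@[simp] lemma trCLM_apply (A : Matrix (Fin N) (Fin N) ℂ) : trCLM N A = (A.trace).re := rfl

noncomputable def Ffun (ρ O : Matrix (Fin N) (Fin N) ℂ) (a b : Fin m → ℕ) (α : Fin m → ℝ) : ℝ :=
  ((ρ * (Mfun V H a α)ᴴ * O * Mfun V H b α).trace).re

lemma Ffun_eq (ρ O : Matrix (Fin N) (Fin N) ℂ) (a b : Fin m → ℕ) :
    Ffun V H ρ O a b = fun α =>
      trCLM N (ρ * ctCLM N (Mfun V H a α) * O * Mfun V H b α) := rfl

lemma contDiff_Ffun (ρ O : Matrix (Fin N) (Fin N) ℂ) (a b : Fin m → ℕ) (k : ℕ) :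
    ContDiff ℝ k (Ffun V H ρ O a b) := by
  rw [Ffun_eq]
  exact (trCLM N).contDiff.comp
    ((((contDiff_const (c := ρ)).mul ((ctCLM N).contDiff.comp
        (contDiff_PLf V H (List.finRange m) a k))).mul (contDiff_const (c := O))).mul
      (contDiff_PLf V H (List.finRange m) b k))

lemma hasDerivAt_Ffun_line (ρ O : Matrix (Fin N) (Fin N) ℂ) (a b : Fin m → ℕ)
    (y : Fin m → ℝ) (l : Fin m) (t : ℝ) :
    HasDerivAt (fun s : ℝ => Ffun V H ρ O a b (y + s • esing l))
      (Ffun V H ρ O (incr a l) b (y + t • esing l)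
        + Ffun V H ρ O a (incr b l) (y + t • esing l)) t := by
  have ha := hasDerivAt_Mfun_line V H a y l t
  have hb := hasDerivAt_Mfun_line V H b y l t
  have ha' : HasDerivAt (fun s : ℝ => (Mfun V H a (y + s • esing l))ᴴ)
      ((Mfun V H (incr a l) (y + t • esing l))ᴴ) t := by
    exact (ctCLM N).hasFDerivAt.comp_hasDerivAt t ha
  have hprod := ((ha'.const_mul ρ).mul_const O).mul hb
  have := (trCLM N).hasFDerivAt.comp_hasDerivAt t hprod
  simp only [map_add] at this
  convert this using 2
  all_goals rfl
lemma fderiv_Ffun_single (ρ O : Matrix (Fin N) (Fin N) ℂ) (a b : Fin m → ℕ)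
    (y : Fin m → ℝ) (l : Fin m) :
    fderiv ℝ (Ffun V H ρ O a b) y (esing l)
      = Ffun V H ρ O (incr a l) b y + Ffun V H ρ O a (incr b l) y := by
  have hcd : ContDiff ℝ (1 : ℕ) (Ffun V H ρ O a b) := contDiff_Ffun V H ρ O a b 1
  have hdiff : DifferentiableAt ℝ (Ffun V H ρ O a b) y :=
    (hcd.differentiable (by simp)).differentiableAt
  have h0 : y + (0 : ℝ) • esing l = y := by simp
  have hγ : HasDerivAt (fun s : ℝ => y + s • esing l) (esing l) 0 := by
    simpa using ((hasDerivAt_id (0 : ℝ)).smul_const (esing l)).const_add y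
  have hF : HasFDerivAt (Ffun V H ρ O a b) (fderiv ℝ (Ffun V H ρ O a b) y)
      (y + (0 : ℝ) • esing l) := h0.symm ▸ hdiff.hasFDerivAt
  have hcomp := hF.comp_hasDerivAt 0 hγ
  have hline := hasDerivAt_Ffun_line V H ρ O a b y l 0
  have := hcomp.unique hline
  rw [h0] at this
  exact this
lemma mat_norm_one (hN : 1 ≤ N) : ‖(1 : Matrix (Fin N) (Fin N) ℂ)‖ = 1 := by
  haveI : Nonempty (Fin N) := ⟨⟨0, hN⟩⟩
  haveI : Nontrivial (EuclideanSpace ℂ (Fin N)) := by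
    refine nontrivial_of_ne (EuclideanSpace.single ⟨0, hN⟩ (1 : ℂ)) 0 ?_
    intro h
    have h0 := congrArg (fun v => v ⟨0, hN⟩) h
    simp [EuclideanSpace.single_apply] at h0
  rw [Matrix.cstar_norm_def, map_one]
  exact norm_one

lemma mat_norm_unitary (hN : 1 ≤ N) {W : Matrix (Fin N) (Fin N) ℂ}
    (h : star W * W = 1) : ‖W‖ = 1 := by
  have h2 : ‖W‖ * ‖W‖ = 1 := by
    rw [← CStarRing.norm_star_mul_self, h, mat_norm_one hN]
  rcases mul_self_eq_one_iff.mp h2 with h' | h'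
  · exact h'
  · nlinarith [norm_nonneg W]

lemma exp_skew_star_mul_self {Hl : Matrix (Fin N) (Fin N) ℂ} (hH : Hl.IsHermitian) (t : ℝ) :
    star (exp (t • Bgen Hl)) * exp (t • Bgen Hl) = 1 := by
  have hmem : t • Bgen Hl ∈ skewAdjoint (Matrix (Fin N) (Fin N) ℂ) := by
    rw [skewAdjoint.mem_iff]
    have hstar : star (Bgen Hl) = -Bgen Hl := by
      show ((-Complex.I) • Hl)ᴴ = -((-Complex.I) • Hl)
      rw [Matrix.conjTranspose_smul, hH.eq]
      simp
    rw [star_smul, hstar, star_trivial, smul_neg]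
  let +nondep : NormedAlgebra ℚ (Matrix (Fin N) (Fin N) ℂ) := .restrictScalars ℚ ℂ _
  exact (Unitary.mem_iff.mp (exp_mem_unitary_of_mem_skewAdjoint hmem)).1

lemma mat_norm_pow_le (hN : 1 ≤ N) (A : Matrix (Fin N) (Fin N) ℂ) (n : ℕ) :
    ‖A ^ n‖ ≤ ‖A‖ ^ n := by
  induction n with
  | zero => simp [mat_norm_one hN]
  | succ n ih =>
    rw [pow_succ, pow_succ]
    exact le_trans (norm_mul_le _ _) (mul_le_mul_of_nonneg_right ih (norm_nonneg A) |>.trans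
      (le_refl _) |> fun h => by nlinarith [norm_nonneg (A ^ n), norm_nonneg A, ih])
lemma norm_Bgen (Hl : Matrix (Fin N) (Fin N) ℂ) : ‖Bgen Hl‖ = ‖Hl‖ := by
  rw [Bgen, norm_smul]
  simp

lemma norm_Gfac_le (hN : 1 ≤ N) {Vl Hl : Matrix (Fin N) (Fin N) ℂ} (hH : Hl.IsHermitian)
    (hV : star Vl * Vl = 1) (n : ℕ) (t : ℝ) :
    ‖Gfac Vl Hl n t‖ ≤ ‖Hl‖ ^ n := by
  have h1 : ‖Gfac Vl Hl n t‖ ≤ ‖Vl‖ * ‖Bgen Hl ^ n‖ * ‖exp (t • Bgen Hl)‖ :=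
    le_trans (norm_mul_le _ _)
      (mul_le_mul_of_nonneg_right (norm_mul_le _ _) (norm_nonneg _))
  rw [mat_norm_unitary hN hV, mat_norm_unitary hN (exp_skew_star_mul_self hH t), one_mul,
    mul_one] at h1
  exact h1.trans ((mat_norm_pow_le hN _ n).trans (by rw [norm_Bgen]))

lemma norm_PLf_le (hN : 1 ≤ N) (hH : ∀ l, (H l).IsHermitian)
    (hV : ∀ l, star (V l) * V l = 1) (L : List (Fin m)) (b : Fin m → ℕ) (α : Fin m → ℝ) :
    ‖PLf V H L b α‖ ≤ (L.map (fun l => ‖H l‖ ^ b l)).prod := by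
  induction L with
  | nil => simp [PLf, mat_norm_one hN]
  | cons l L ih =>
    rw [PLf_cons, List.map_cons, List.prod_cons]
    refine le_trans (norm_mul_le _ _) (mul_le_mul ?_ ih (norm_nonneg _) ?_)
    · exact norm_Gfac_le hN (hH l) (hV l) (b l) (α l)
    · positivity

lemma norm_Mfun_le (hN : 1 ≤ N) (hH : ∀ l, (H l).IsHermitian)
    (hV : ∀ l, star (V l) * V l = 1) (b : Fin m → ℕ) (α : Fin m → ℝ) :
    ‖Mfun V H b α‖ ≤ ∏ l, ‖H l‖ ^ b l := by
  rw [Mfun, Fin.prod_univ_def]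
  exact norm_PLf_le V H hN hH hV _ b α
open scoped MatrixOrder in
lemma abs_re_trace_le {ρ : Matrix (Fin N) (Fin N) ℂ} (hρ : ρ.PosSemidef)
    (hρtr : ρ.trace = 1) (X : Matrix (Fin N) (Fin N) ℂ) :
    |((ρ * X).trace).re| ≤ ‖X‖ := by
  classical
  set s := CFC.sqrt ρ with hs
  have hherm : sᴴ = s := (Matrix.nonneg_iff_posSemidef.mp (CFC.sqrt_nonneg ρ)).1
  have hρss : ρ = s * s := (CFC.sqrt_mul_sqrt_self ρ hρ.nonneg).symm
  set T := Matrix.toEuclideanCLM (𝕜 := ℂ) X with hT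
  set v : Fin N → EuclideanSpace ℂ (Fin N) :=
    fun i => (WithLp.equiv 2 (Fin N → ℂ)).symm (fun j => s j i) with hv
  have hsij : ∀ i j, (starRingEnd ℂ) (s j i) = s i j := by
    intro i j
    conv_rhs => rw [← hherm]
    simp [Matrix.conjTranspose_apply]
  have happ : ∀ i, T (v i) = (WithLp.equiv 2 (Fin N → ℂ)).symm
      (X.mulVec (fun j => s j i)) := by
    intro i
    rfl
  have hinner : ∀ i, (inner ℂ (v i) (T (v i)) : ℂ) = (s * X * s) i i := by
    intro i
    rw [happ i]
    simp only [hv, PiLp.inner_apply, WithLp.equiv_symm_apply, PiLp.toLp_apply, RCLike.inner_apply, hsij,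
      Matrix.mul_apply, Matrix.mulVec, dotProduct]
    simp only [Finset.mul_sum, Finset.sum_mul, mul_assoc]
    exact Finset.sum_comm.trans (Finset.sum_congr rfl fun _ _ => Finset.sum_congr rfl fun _ _ => by ring)
  have htr : (ρ * X).trace = ∑ i, (inner ℂ (v i) (T (v i)) : ℂ) := by
    have h1 : (ρ * X).trace = (s * X * s).trace := by
      rw [hρss]; exact (Matrix.trace_mul_cycle s X s).symm
    rw [h1]
    simp only [Matrix.trace, Matrix.diag, hinner]
  have hnv : ∑ i, ‖v i‖ ^ 2 = 1 := by
    have h2 : ∑ i, (inner ℂ (v i) (v i) : ℂ) = ρ.trace := by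
      rw [hρss]
      simp only [hv, PiLp.inner_apply, WithLp.equiv_symm_apply, PiLp.toLp_apply, RCLike.inner_apply, hsij,
        Matrix.trace, Matrix.diag, Matrix.mul_apply]
      exact Finset.sum_congr rfl fun _ _ => Finset.sum_congr rfl fun _ _ => mul_comm _ _
    have h3 : ∀ i, (inner ℂ (v i) (v i) : ℂ) = (‖v i‖ ^ 2 : ℝ) := by
      intro i
      rw [inner_self_eq_norm_sq_to_K (𝕜 := ℂ) (v i)]
      norm_cast
    rw [Finset.sum_congr rfl (fun i _ => h3 i), hρtr] at h2
    have h4 : ((∑ i, ‖v i‖ ^ 2 : ℝ) : ℂ) = 1 := by push_cast at h2 ⊢; exact h2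
    exact_mod_cast h4
  calc |((ρ * X).trace).re| ≤ ‖(ρ * X).trace‖ := by
        exact Complex.abs_re_le_norm _
    _ = ‖∑ i, (inner ℂ (v i) (T (v i)) : ℂ)‖ := by rw [htr]
    _ ≤ ∑ i, ‖(inner ℂ (v i) (T (v i)) : ℂ)‖ := norm_sum_le _ _
    _ ≤ ∑ i, ‖T‖ * ‖v i‖ ^ 2 := by
        refine Finset.sum_le_sum fun i _ => ?_
        calc ‖(inner ℂ (v i) (T (v i)) : ℂ)‖ ≤ ‖v i‖ * ‖T (v i)‖ := norm_inner_le_norm (𝕜 := ℂ) _ _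
          _ ≤ ‖v i‖ * (‖T‖ * ‖v i‖) :=
              mul_le_mul_of_nonneg_left (T.le_opNorm _) (norm_nonneg _)
          _ = ‖T‖ * ‖v i‖ ^ 2 := by ring
    _ = ‖T‖ * ∑ i, ‖v i‖ ^ 2 := by rw [← Finset.mul_sum]
    _ = ‖X‖ := by rw [hnv, mul_one]; rfl
set_option maxHeartbeats 1000000 in
lemma abs_Ffun_le (hN : 1 ≤ N) {ρ : Matrix (Fin N) (Fin N) ℂ} (O : Matrix (Fin N) (Fin N) ℂ)
    (hρ : ρ.PosSemidef) (hρtr : ρ.trace = 1) (hH : ∀ l, (H l).IsHermitian)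
    (hV : ∀ l, star (V l) * V l = 1) (a b : Fin m → ℕ) (α : Fin m → ℝ) :
    |Ffun V H ρ O a b α| ≤ ‖O‖ * ∏ l, ‖H l‖ ^ (a l + b l) := by
  have h1 : |Ffun V H ρ O a b α|
      ≤ ‖(Mfun V H a α)ᴴ * O * Mfun V H b α‖ := by
    have h := abs_re_trace_le hρ hρtr ((Mfun V H a α)ᴴ * O * Mfun V H b α)
    have hrw : Ffun V H ρ O a b α
        = ((ρ * ((Mfun V H a α)ᴴ * O * Mfun V H b α)).trace).re := by
      rw [Ffun]; simp only [mul_assoc]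
    rw [hrw]
    exact h
  have ha := norm_Mfun_le V H hN hH hV a α
  have hb := norm_Mfun_le V H hN hH hV b α
  have h2 : ‖(Mfun V H a α)ᴴ * O * Mfun V H b α‖
      ≤ ‖Mfun V H a α‖ * ‖O‖ * ‖Mfun V H b α‖ := by
    refine le_trans (norm_mul_le _ _) ?_
    refine mul_le_mul_of_nonneg_right ?_ (norm_nonneg _)
    refine le_trans (norm_mul_le _ _) ?_
    rw [Matrix.l2_opNorm_conjTranspose]
  have h3 : ‖Mfun V H a α‖ * ‖O‖ * ‖Mfun V H b α‖
      ≤ (∏ l, ‖H l‖ ^ a l) * ‖O‖ * ∏ l, ‖H l‖ ^ b l := by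
    have hOn : (0:ℝ) ≤ ‖O‖ := norm_nonneg _
    have hpa : (0:ℝ) ≤ ∏ l, ‖H l‖ ^ a l := Finset.prod_nonneg fun l _ => pow_nonneg (norm_nonneg _) _
    have h4 : ‖Mfun V H a α‖ * ‖O‖ ≤ (∏ l, ‖H l‖ ^ a l) * ‖O‖ :=
      mul_le_mul_of_nonneg_right ha hOn
    exact mul_le_mul h4 hb (norm_nonneg _) (mul_nonneg hpa hOn)
  have h5 : (∏ l, ‖H l‖ ^ a l) * ‖O‖ * ∏ l, ‖H l‖ ^ b l = ‖O‖ * ∏ l, ‖H l‖ ^ (a l + b l) := by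
    simp only [pow_add, Finset.prod_mul_distrib]
    ring
  linarith [h1.trans (h2.trans h3)]
lemma prod_pow_incr (g : Fin m → ℝ) (c d : Fin m → ℕ) (l₀ : Fin m) :
    ∏ l, g l ^ (Function.update c l₀ (c l₀ + 1) l + d l)
      = (∏ l, g l ^ (c l + d l)) * g l₀ := by
  have h : ∀ l, g l ^ (Function.update c l₀ (c l₀ + 1) l + d l)
      = g l ^ (c l + d l) * (if l = l₀ then g l else 1) := by
    intro l
    rcases eq_or_ne l l₀ with rfl | h
    · rw [Function.update_self, if_pos rfl,
        show c l + 1 + d l = (c l + d l) + 1 from by omega, pow_succ]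
    · rw [Function.update_of_ne h, if_neg h, mul_one]
  rw [Finset.prod_congr rfl fun l _ => h l, Finset.prod_mul_distrib,
    Finset.prod_ite_eq' Finset.univ l₀ g]
  simp

lemma prod_pow_incr' (g : Fin m → ℝ) (c d : Fin m → ℕ) (l₀ : Fin m) :
    ∏ l, g l ^ (c l + Function.update d l₀ (d l₀ + 1) l)
      = (∏ l, g l ^ (c l + d l)) * g l₀ := by
  have h1 : ∀ l, c l + Function.update d l₀ (d l₀ + 1) l
      = Function.update d l₀ (d l₀ + 1) l + c l := fun l => by omega
  rw [Finset.prod_congr rfl fun l _ => by rw [h1 l], prod_pow_incr g d c l₀]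
  congr 1
  exact Finset.prod_congr rfl fun l _ => by rw [add_comm]

lemma main_bound (hN : 1 ≤ N) {ρ : Matrix (Fin N) (Fin N) ℂ} (O : Matrix (Fin N) (Fin N) ℂ)
    (hρ : ρ.PosSemidef) (hρtr : ρ.trace = 1) (hH : ∀ l, (H l).IsHermitian)
    (hV : ∀ l, star (V l) * V l = 1) :
    ∀ (k : ℕ) (idx : Fin k → Fin m) (a b : Fin m → ℕ) (α : Fin m → ℝ),
      |iteratedFDeriv ℝ k (Ffun V H ρ O a b) α (fun j => esing (idx j))|
        ≤ ‖O‖ * (∏ l, ‖H l‖ ^ (a l + b l)) * ∏ j, (2 * ‖H (idx j)‖) := by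
  intro k
  induction k with
  | zero =>
    intro idx a b α
    rw [iteratedFDeriv_zero_apply]
    simpa using abs_Ffun_le V H hN O hρ hρtr hH hV a b α
  | succ k ih =>
    intro idx a b α
    set l₀ := idx (Fin.last k) with hl₀
    set w := esing l₀ with hw
    have hF : ContDiff ℝ ((k + 1 : ℕ) : WithTop ℕ∞) (Ffun V H ρ O a b) :=
      contDiff_Ffun V H ρ O a b (k + 1)
    have hfd : ContDiff ℝ (k : ℕ) (fderiv ℝ (Ffun V H ρ O a b)) :=
      hF.fderiv_right (by exact_mod_cast le_refl (k + 1 : ℕ))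
    rw [iteratedFDeriv_succ_apply_right]
    have hcomp := (ContinuousLinearMap.apply ℝ ℝ w).iteratedFDeriv_comp_left (hfd.contDiffAt (x := α))
      (le_refl (k : WithTop ℕ∞))
    have heq1 : iteratedFDeriv ℝ k (fun y => fderiv ℝ (Ffun V H ρ O a b) y) α
          (Fin.init fun j => esing (idx j)) ((fun j => esing (idx j)) (Fin.last k))
        = iteratedFDeriv ℝ k
            ((ContinuousLinearMap.apply ℝ ℝ w) ∘ (fderiv ℝ (Ffun V H ρ O a b))) α
            (Fin.init fun j => esing (idx j)) := by
      rw [hcomp]; rfl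
    rw [heq1]
    have heq2 : (ContinuousLinearMap.apply ℝ ℝ w) ∘ (fderiv ℝ (Ffun V H ρ O a b))
        = fun y => Ffun V H ρ O (incr a l₀) b y + Ffun V H ρ O a (incr b l₀) y :=
      funext fun y => fderiv_Ffun_single V H ρ O a b y l₀
    rw [heq2, iteratedFDeriv_add_apply' (contDiff_Ffun V H ρ O (incr a l₀) b k).contDiffAt
      (contDiff_Ffun V H ρ O a (incr b l₀) k).contDiffAt, ContinuousMultilinearMap.add_apply]
    have hinit : (Fin.init fun j : Fin (k+1) => esing (idx j))
        = fun j : Fin k => esing (idx (Fin.castSucc j)) := rfl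
    have ih1 := ih (fun j => idx (Fin.castSucc j)) (incr a l₀) b α
    have ih2 := ih (fun j => idx (Fin.castSucc j)) a (incr b l₀) α
    rw [hinit]
    set T := ∏ j : Fin k, (2 * ‖H (idx (Fin.castSucc j))‖) with hT
    set P := ∏ l, ‖H l‖ ^ (a l + b l) with hP
    have hPa : ∏ l, ‖H l‖ ^ (incr a l₀ l + b l) = P * ‖H l₀‖ := prod_pow_incr _ _ _ _
    have hPb : ∏ l, ‖H l‖ ^ (a l + incr b l₀ l) = P * ‖H l₀‖ := prod_pow_incr' _ _ _ _
    rw [hPa] at ih1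
    rw [hPb] at ih2
    have htarget : ‖O‖ * P * ∏ j : Fin (k+1), (2 * ‖H (idx j)‖)
        = ‖O‖ * (P * ‖H l₀‖) * T + ‖O‖ * (P * ‖H l₀‖) * T := by
      rw [Fin.prod_univ_castSucc, ← hT, ← hl₀]
      ring
    rw [htarget]
    exact le_trans (abs_add_le _ _) (add_le_add ih1 ih2)
lemma specNorm_eq (A : Matrix (Fin N) (Fin N) ℂ) : specNorm A = ‖A‖ := rfl

lemma specNorm_nonneg (A : Matrix (Fin N) (Fin N) ℂ) : 0 ≤ specNorm A := norm_nonneg _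

/-- Bounded derivatives for the expectation value of a parametrized
unitary circuit `U(α) = ∏_l V_l exp(−i α_l H_l)` with Hermitian generators `H_l`:
every mixed partial derivative of `f(α) = Tr(ρ U(α)† O U(α))` of multi-order
`(k_1, …, k_m)` (encoded as the `k`-th Fréchet derivative evaluated on a tuple of
coordinate directions containing `k_l` copies of direction `l`) is bounded by
`‖O‖ ∏_l (2‖H_l‖)^{k_l}`, and consequently by `‖O‖ (2 max_l ‖H_l‖)^k`. -/
theorem expectation_derivative_bound (N m : ℕ) (hN : 1 ≤ N) (hm : 1 ≤ m)
    (ρ O : Matrix (Fin N) (Fin N) ℂ) (V H : Fin m → Matrix (Fin N) (Fin N) ℂ)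
    (hρ : ρ.PosSemidef) (hρtr : ρ.trace = 1) (hO : O.IsHermitian)
    (hH : ∀ l, (H l).IsHermitian) (hV : ∀ l, V l ∈ Matrix.unitaryGroup (Fin N) ℂ)
    (U : (Fin m → ℝ) → Matrix (Fin N) (Fin N) ℂ)
    (hU : ∀ α, U α = ((List.finRange m).map
      (fun l => V l * NormedSpace.exp ((-(Complex.I * ((α l : ℝ) : ℂ))) • H l))).prod)
    (f : (Fin m → ℝ) → ℝ)
    (hf : ∀ α, f α = ((ρ * (U α)ᴴ * O * U α).trace).re)
    (k : ℕ) (kvec : Fin m → ℕ) (hk : ∑ l, kvec l = k)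
    (idx : Fin k → Fin m)
    (hidx : ∀ l, (Finset.univ.filter (fun j => idx j = l)).card = kvec l)
    (α : Fin m → ℝ) :
    |iteratedFDeriv ℝ k f α (fun j => Pi.single (idx j) (1 : ℝ))|
        ≤ specNorm O * ∏ l, (2 * specNorm (H l)) ^ kvec l ∧
      |iteratedFDeriv ℝ k f α (fun j => Pi.single (idx j) (1 : ℝ))|
        ≤ specNorm O * (2 * ⨆ l, specNorm (H l)) ^ k := by
  classical
  -- identify `U` with `Mfun` at exponent 0
  have hUM : ∀ β, U β = Mfun V H (fun _ => 0) β := by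
    intro β
    rw [hU, Mfun, PLf]
    congr 1
    apply List.map_congr_left
    intro l _
    rw [Gfac, pow_zero, mul_one]
    have harg : (β l : ℝ) • Bgen (H l) = (-(Complex.I * ((β l : ℝ) : ℂ))) • H l := by
      rw [Bgen, ← smul_one_smul ℂ ((β l : ℝ)) ((-Complex.I) • H l), smul_smul]
      congr 1
      simp only [Complex.real_smul, mul_one]
      ring
    rw [harg]
  have hfe : f = Ffun V H ρ O (fun _ => 0) (fun _ => 0) := by
    funext β
    rw [hf β, hUM β]
    rfl
  have hVs : ∀ l, star (V l) * V l = 1 := fun l => Unitary.star_mul_self_of_mem (hV l)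
  have main := main_bound V H hN O hρ hρtr hH hVs k idx (fun _ => 0) (fun _ => 0) α
  simp only [Nat.add_zero, pow_zero, Finset.prod_const_one, mul_one] at main
  have hsingle : (fun j => Pi.single (idx j) (1 : ℝ)) = fun j => esing (idx j) := rfl
  have hprod : ∏ l, (2 * specNorm (H l)) ^ kvec l = ∏ j, (2 * ‖H (idx j)‖) := by
    simp only [specNorm_eq]
    rw [← Finset.prod_fiberwise_of_maps_to (g := idx) (t := Finset.univ)
      (fun j _ => Finset.mem_univ (idx j)) (fun j => 2 * ‖H (idx j)‖)]
    refine Finset.prod_congr rfl fun l _ => ?_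
    rw [Finset.prod_congr rfl (fun j hj => by rw [(Finset.mem_filter.mp hj).2]),
      Finset.prod_const, hidx l]
  have hfirst : |iteratedFDeriv ℝ k f α (fun j => Pi.single (idx j) (1 : ℝ))|
      ≤ specNorm O * ∏ l, (2 * specNorm (H l)) ^ kvec l := by
    rw [hfe, hsingle, specNorm_eq, hprod]
    exact main
  refine ⟨hfirst, hfirst.trans ?_⟩
  haveI : Nonempty (Fin m) := ⟨⟨0, hm⟩⟩
  have hbdd : BddAbove (Set.range fun l => specNorm (H l)) := (Set.finite_range _).bddAbove
  have hS : ∀ l, specNorm (H l) ≤ ⨆ l', specNorm (H l') := fun l =>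
    le_ciSup hbdd l
  have hSn : (0:ℝ) ≤ ⨆ l', specNorm (H l') := (specNorm_nonneg (H ⟨0, hm⟩)).trans (hS _)
  have h2 : ∏ l, (2 * specNorm (H l)) ^ kvec l
      ≤ ∏ l, (2 * ⨆ l', specNorm (H l')) ^ kvec l := by
    refine Finset.prod_le_prod (fun l _ => pow_nonneg ?_ _) (fun l _ => ?_)
    · exact mul_nonneg (by norm_num) (specNorm_nonneg _)
    · exact pow_le_pow_left₀ (mul_nonneg (by norm_num) (specNorm_nonneg _))
        (mul_le_mul_of_nonneg_left (hS l) (by norm_num)) _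
  have h3 : ∏ l, (2 * ⨆ l', specNorm (H l')) ^ kvec l
      = (2 * ⨆ l', specNorm (H l')) ^ k := by
    rw [Finset.prod_pow_eq_pow_sum, hk]
  exact mul_le_mul_of_nonneg_left (h2.trans (le_of_eq h3)) (specNorm_nonneg O)
end

section
/- For all natural numbers m and k with 1 ≤ k, and every real number x with 0 ≤ x ≤ 1 and k ≤ m·x, the partial binomial sum satisfies Σ_{j=0}^{k} C(m, j) x^j ≤ (e m x / k)^k. -/
/-- For all naturals `m, k` with `1 ≤ k`, and every real `x` with
`0 ≤ x ≤ 1` and `k ≤ m·x`, one has `Σ_{j=0}^{k} C(m, j) x^j ≤ (e m x / k)^k`. -/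
theorem binomial_sum_first_powers_le (m k : ℕ) (x : ℝ) (hk : 1 ≤ k)
    (hx0 : 0 ≤ x) (hx1 : x ≤ 1) (hkmx : (k : ℝ) ≤ (m : ℝ) * x) :
    ∑ j ∈ Finset.range (k + 1), (m.choose j : ℝ) * x ^ j
      ≤ (Real.exp 1 * (m : ℝ) * x / (k : ℝ)) ^ k := by
  have hk' : (1 : ℝ) ≤ (k : ℝ) := by exact_mod_cast hk
  have hkpos : (0 : ℝ) < (k : ℝ) := by linarith
  have hmx : (0 : ℝ) < (m : ℝ) * x := by linarith
  have hmnn : (0 : ℝ) ≤ (m : ℝ) := Nat.cast_nonneg m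
  have hxpos : (0 : ℝ) < x := by
    by_contra h
    push_neg at h
    nlinarith
  have hmpos : (0 : ℝ) < (m : ℝ) := by nlinarith
  have hkm : k ≤ m := by
    have : (k : ℝ) ≤ (m : ℝ) := by nlinarith
    exact_mod_cast this
  set t : ℝ := (k : ℝ) / ((m : ℝ) * x) with ht_def
  have ht0 : 0 < t := div_pos hkpos hmx
  have ht1 : t ≤ 1 := (div_le_one hmx).2 hkmx
  have hxt : x * t = (k : ℝ) / (m : ℝ) := by
    field_simp [ht_def]
    rw [ht_def]; field_simp
  have step1 : ∑ j ∈ Finset.range (k + 1), (m.choose j : ℝ) * x ^ j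
      ≤ (1 / t ^ k) * ∑ j ∈ Finset.range (k + 1), (m.choose j : ℝ) * (x * t) ^ j := by
    rw [Finset.mul_sum]
    apply Finset.sum_le_sum
    intro j hj
    have hjk : j ≤ k := Nat.lt_succ_iff.mp (Finset.mem_range.mp hj)
    have htk : t ^ k ≤ t ^ j := pow_le_pow_of_le_one ht0.le ht1 hjk
    have htkpos : 0 < t ^ k := pow_pos ht0 k
    have hC : (0 : ℝ) ≤ (m.choose j : ℝ) := Nat.cast_nonneg _
    have hxj : (0 : ℝ) ≤ x ^ j := pow_nonneg hx0 j
    rw [mul_pow]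
    rw [div_mul_eq_mul_div, one_mul, le_div_iff₀ htkpos]
    calc (m.choose j : ℝ) * x ^ j * t ^ k
        ≤ (m.choose j : ℝ) * x ^ j * t ^ j := mul_le_mul_of_nonneg_left htk (by positivity)
      _ = (m.choose j : ℝ) * (x ^ j * t ^ j) := by ring
  have step2 : ∑ j ∈ Finset.range (k + 1), (m.choose j : ℝ) * (x * t) ^ j
      ≤ (1 + x * t) ^ m := by
    have hexp : (1 + x * t) ^ m = ∑ j ∈ Finset.range (m + 1), (m.choose j : ℝ) * (x * t) ^ j := by
      rw [add_comm, add_pow]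
      apply Finset.sum_congr rfl
      intro j hj
      ring
    rw [hexp]
    apply Finset.sum_le_sum_of_subset_of_nonneg
    · exact Finset.range_subset_range.mpr (Nat.succ_le_succ hkm)
    · intro j _ _
      positivity
  have step3 : (1 + x * t) ^ m ≤ Real.exp 1 ^ k := by
    have h1' : 1 + x * t ≤ Real.exp (x * t) := by
      have := Real.add_one_le_exp (x * t)
      linarith
    have hbase : (0 : ℝ) ≤ 1 + x * t := by positivity
    calc (1 + x * t) ^ m ≤ (Real.exp (x * t)) ^ m := pow_le_pow_left₀ hbase h1' m
      _ = Real.exp ((m : ℝ) * (x * t)) := by rw [← Real.exp_nat_mul]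
      _ = Real.exp (k : ℝ) := by rw [hxt]; congr 1; field_simp
      _ = Real.exp 1 ^ k := by rw [← Real.exp_nat_mul]; ring_nf
  have htk : (1 / t ^ k) = ((m : ℝ) * x / (k : ℝ)) ^ k := by
    rw [ht_def, one_div, ← inv_pow, inv_div]
  calc ∑ j ∈ Finset.range (k + 1), (m.choose j : ℝ) * x ^ j
      ≤ (1 / t ^ k) * ∑ j ∈ Finset.range (k + 1), (m.choose j : ℝ) * (x * t) ^ j := step1
    _ ≤ (1 / t ^ k) * ((1 + x * t) ^ m) := by
        apply mul_le_mul_of_nonneg_left step2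
        positivity
    _ ≤ (1 / t ^ k) * (Real.exp 1 ^ k) := by
        apply mul_le_mul_of_nonneg_left step3
        positivity
    _ = (Real.exp 1 * (m : ℝ) * x / (k : ℝ)) ^ k := by
        rw [htk, ← mul_pow]
        congr 1
        field_simp
end

section
/- For all natural numbers m and k with 1 ≤ k ≤ m, and every real number x with 0 ≤ x and m·x ≤ k, the tail binomial sum satisfies Σ_{j=k}^{m} C(m, j) x^j ≤ (e m x / k)^k. -/
/-- For all naturals `m, k` with `1 ≤ k ≤ m`, and every real `x` with
`0 ≤ x` and `m·x ≤ k`, the tail binomial sum satisfies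
`Σ_{j=k}^{m} C(m, j) x^j ≤ (e m x / k)^k`. -/
theorem binomial_sum_last_powers_le (m k : ℕ) (x : ℝ) (hk : 1 ≤ k) (hkm : k ≤ m)
    (hx0 : 0 ≤ x) (hmx : (m : ℝ) * x ≤ (k : ℝ)) :
    ∑ j ∈ Finset.Icc k m, (m.choose j : ℝ) * x ^ j
      ≤ (Real.exp 1 * (m : ℝ) * x / (k : ℝ)) ^ k := by
  have hm1 : 1 ≤ m := le_trans hk hkm
  have hmpos : (0:ℝ) < m := by exact_mod_cast Nat.lt_of_lt_of_le Nat.zero_lt_one hm1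
  have hkpos : (0:ℝ) < k := by exact_mod_cast hk
  rcases eq_or_lt_of_le hx0 with h0 | hxpos
  · rw [← h0]
    have hz : ∑ j ∈ Finset.Icc k m, (m.choose j : ℝ) * (0:ℝ) ^ j = 0 := by
      apply Finset.sum_eq_zero
      intro j hj
      have h1j : 1 ≤ j := le_trans hk (Finset.mem_Icc.mp hj).1
      rw [zero_pow (by omega), mul_zero]
    rw [hz, mul_zero, zero_div, zero_pow (by omega)]
  · set t : ℝ := (k:ℝ) / ((m:ℝ) * x) with ht
    have hmxpos : 0 < (m:ℝ) * x := by positivity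
    have htpos : 0 < t := by positivity
    have ht1 : 1 ≤ t := (one_le_div hmxpos).mpr hmx
    have hxt : x * t = (k:ℝ) / m := by
      rw [ht]; field_simp
    have hxtpos : 0 ≤ x * t := by positivity
    calc ∑ j ∈ Finset.Icc k m, (m.choose j : ℝ) * x ^ j
        ≤ ∑ j ∈ Finset.Icc k m, (m.choose j : ℝ) * (x*t) ^ j / t ^ k := by
          apply Finset.sum_le_sum
          intro j hj
          have hkj : k ≤ j := (Finset.mem_Icc.mp hj).1
          have htk : t ^ k ≤ t ^ j := pow_le_pow_right₀ ht1 hkj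
          rw [mul_pow, div_eq_mul_inv, mul_assoc, mul_assoc]
          apply mul_le_mul_of_nonneg_left _ (by positivity)
          rw [← mul_assoc, ← div_eq_mul_inv]
          calc x ^ j = x ^ j * 1 := (mul_one _).symm
            _ ≤ x ^ j * (t ^ j / t ^ k) := by
                apply mul_le_mul_of_nonneg_left _ (by positivity)
                rw [le_div_iff₀ (by positivity)]
                simpa using htk
            _ = x ^ j * t ^ j / t ^ k := by ring
      _ = (∑ j ∈ Finset.Icc k m, (m.choose j : ℝ) * (x*t) ^ j) / t ^ k := by
          rw [Finset.sum_div]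
      _ ≤ (∑ j ∈ Finset.range (m+1), (m.choose j : ℝ) * (x*t) ^ j) / t ^ k := by
          gcongr
          intro j hj
          rw [Finset.mem_range]
          exact Nat.lt_succ_of_le (Finset.mem_Icc.mp hj).2
      _ = (1 + x*t) ^ m / t ^ k := by
          rw [add_comm 1 (x*t), add_pow]
          congr 1
          apply Finset.sum_congr rfl
          intro j hj
          rw [one_pow]; ring
      _ ≤ Real.exp (x*t) ^ m / t ^ k := by
          gcongr
          have := Real.add_one_le_exp (x*t)
          linarith
      _ = Real.exp k / t ^ k := by
          rw [← Real.exp_nat_mul, hxt]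
          congr 1
          field_simp
      _ = (Real.exp 1 * (m:ℝ) * x / k) ^ k := by
          have he : Real.exp (k:ℝ) = Real.exp 1 ^ k := by
            rw [← Real.exp_nat_mul, mul_one]
          rw [he, ht, ← div_pow]
          congr 1
          field_simp
end

section
/- Let m, κ ∈ ℕ with 1 ≤ κ ≤ m and let σ ≥ 0 with σ² ≤ κ/m. Let μ_1, …, μ_m be Borel probability measures on ℝ, each symmetric under t ↦ −t and satisfying ∫ sin²(t) dμ_i(t) ≤ σ², and let μ = μ_1 ⊗ ⋯ ⊗ μ_m be the product measure on ℝ^m. Let d : {1, −1}^m → [−1, 1] be any family of coefficients. Then ∫ ( Σ_{ω ∈ {1,−1}^m : #sin(ω) ≥ κ} Φ_ω(α) d_ω )² dμ(α) ≤ (e m σ² / κ)^κ. -/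
open MeasureTheory

/-- The path coefficient `Φ_ω(α) = ∏_i φ_{ω_i}(α_i)` where a `true` entry of `ω` stands for
`ω_i = −1` (a sine factor) and a `false` entry for `ω_i = 1` (a cosine factor). -/
noncomputable def pathCoeff (m : ℕ) (ω : Fin m → Bool) (α : Fin m → ℝ) : ℝ :=
  ∏ i, if ω i then Real.sin (α i) else Real.cos (α i)

/-- `#sin(ω)`: the number of sine factors (entries `ω_i = −1`, encoded as `true`). -/
def numSin (m : ℕ) (ω : Fin m → Bool) : ℕ :=
  (Finset.univ.filter (fun i => ω i = true)).card

section Aux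

noncomputable def phiB (b : Bool) (t : ℝ) : ℝ := if b then Real.sin t else Real.cos t

lemma phiB_measurable (b : Bool) : Measurable (phiB b) := by
  cases b
  · exact Real.measurable_cos
  · exact Real.measurable_sin

lemma abs_phiB_le (b : Bool) (t : ℝ) : |phiB b t| ≤ 1 := by
  cases b
  · exact Real.abs_cos_le_one t
  · exact Real.abs_sin_le_one t

lemma phiB_true : phiB true = Real.sin := rfl

lemma phiB_false : phiB false = Real.cos := rfl

lemma pathCoeff_eq (m : ℕ) (ω : Fin m → Bool) (α : Fin m → ℝ) :
    pathCoeff m ω α = ∏ i, phiB (ω i) (α i) := rfl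

lemma integrable_of_bdd {X : Type*} [MeasurableSpace X] {ν : Measure X}
    [IsFiniteMeasure ν] {f : X → ℝ} (hm : Measurable f) {C : ℝ} (h : ∀ x, |f x| ≤ C) :
    Integrable f ν :=
  (integrable_const C).mono' hm.aestronglyMeasurable
    (Filter.Eventually.of_forall (fun x => by simpa using h x))

lemma integral_pi_prod {m : ℕ} (μ : Fin m → Measure ℝ) [∀ i, SigmaFinite (μ i)]
    (g : Fin m → ℝ → ℝ) :
    ∫ α, ∏ i, g i (α i) ∂Measure.pi μ = ∏ i, ∫ t, g i t ∂μ i :=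
  MeasureTheory.integral_fintype_prod_eq_prod (𝕜 := ℝ) g (μ := μ)

lemma sin_cos_zero (ν : Measure ℝ) [IsProbabilityMeasure ν]
    (hs : ν.map (fun t => -t) = ν) :
    ∫ t, Real.sin t * Real.cos t ∂ν = 0 := by
  have h1 : ∫ t, Real.sin t * Real.cos t ∂ν = ∫ t, Real.sin (-t) * Real.cos (-t) ∂ν := by
    conv_lhs => rw [← hs]
    rw [integral_map (φ := fun t : ℝ => -t) (f := fun t => Real.sin t * Real.cos t) (by fun_prop) ((Real.measurable_sin.mul Real.measurable_cos).aestronglyMeasurable)]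
  have h2 : ∫ t, Real.sin (-t) * Real.cos (-t) ∂ν = - ∫ t, Real.sin t * Real.cos t ∂ν := by
    simp only [Real.sin_neg, Real.cos_neg, neg_mul]
    exact integral_neg _
  linarith [h1, h2]

lemma tail_bound (m κ : ℕ) (hκ1 : 1 ≤ κ) (x : ℝ) (hx : 0 ≤ x) (hmx : (m : ℝ) * x ≤ κ) :
    ∑ ω ∈ Finset.univ.filter (fun ω : Fin m → Bool => κ ≤ numSin m ω), x ^ numSin m ω
      ≤ (Real.exp 1 * (m : ℝ) * x / (κ : ℝ)) ^ κ := by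
  have hκpos : (0 : ℝ) < κ := by exact_mod_cast hκ1
  have hreindex : ∑ ω ∈ Finset.univ.filter (fun ω : Fin m → Bool => κ ≤ numSin m ω),
      x ^ numSin m ω
      = ∑ A ∈ Finset.univ.filter (fun A : Finset (Fin m) => κ ≤ A.card), x ^ A.card := by
    refine Finset.sum_nbij' (fun ω => Finset.univ.filter (fun i => ω i = true))
      (fun A => fun i => decide (i ∈ A)) ?_ ?_ ?_ ?_ ?_
    · intro ω hω
      simp only [Finset.mem_filter, Finset.mem_univ, true_and] at hω ⊢
      exact hω
    · intro A hA
      simp only [Finset.mem_filter, Finset.mem_univ, true_and] at hA ⊢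
      have : numSin m (fun i => decide (i ∈ A)) = A.card := by
        unfold numSin; congr 1; ext i; simp
      rw [numSin] at this ⊢
      simpa [this] using hA
    · intro ω hω
      funext i
      by_cases h : ω i <;> simp [h]
    · intro A hA
      ext i; simp
    · intro ω hω; rfl
  rw [hreindex]
  have hsplit : Finset.univ.filter (fun A : Finset (Fin m) => κ ≤ A.card)
      = (Finset.Icc κ m).biUnion (fun k => Finset.powersetCard k Finset.univ) := by
    ext A
    simp only [Finset.mem_filter, Finset.mem_univ, true_and, Finset.mem_biUnion,
      Finset.mem_Icc, Finset.mem_powersetCard]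
    constructor
    · intro h
      exact ⟨A.card, ⟨h, by simpa using Finset.card_le_univ A⟩, Finset.subset_univ A, rfl⟩
    · rintro ⟨k, ⟨hk, -⟩, -, rfl⟩; exact hk
  have hdisj : ∀ k₁ ∈ Finset.Icc κ m, ∀ k₂ ∈ Finset.Icc κ m, k₁ ≠ k₂ →
      Disjoint (Finset.powersetCard k₁ (Finset.univ : Finset (Fin m)))
        (Finset.powersetCard k₂ Finset.univ) := by
    intro k₁ _ k₂ _ hne
    rw [Finset.disjoint_left]
    intro A h1 h2
    rw [Finset.mem_powersetCard] at h1 h2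
    exact hne (h1.2 ▸ h2.2)
  rw [hsplit, Finset.sum_biUnion hdisj]
  have hinner : ∀ k ∈ Finset.Icc κ m,
      ∑ A ∈ Finset.powersetCard k (Finset.univ : Finset (Fin m)), x ^ A.card
        = (m.choose k : ℝ) * x ^ k := by
    intro k _
    rw [Finset.sum_congr rfl (fun A hA => by
      rw [(Finset.mem_powersetCard.mp hA).2]), Finset.sum_const,
      Finset.card_powersetCard, Finset.card_univ, Fintype.card_fin, nsmul_eq_mul]
  rw [Finset.sum_congr rfl hinner]
  have hmxnn : (0 : ℝ) ≤ (m : ℝ) * x := mul_nonneg (Nat.cast_nonneg m) hx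
  calc ∑ k ∈ Finset.Icc κ m, (m.choose k : ℝ) * x ^ k
      ≤ ∑ k ∈ Finset.Icc κ m, ((m : ℝ) * x) ^ κ / (κ : ℝ) ^ κ * ((κ : ℝ) ^ k / (k.factorial : ℝ)) := by
        refine Finset.sum_le_sum fun k hk => ?_
        have hkκ : κ ≤ k := (Finset.mem_Icc.mp hk).1
        have h1 : (m.choose k : ℝ) * x ^ k ≤ ((m : ℝ) ^ k / (k.factorial : ℝ)) * x ^ k := by
          exact mul_le_mul_of_nonneg_right (Nat.choose_le_pow_div k m) (pow_nonneg hx k)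
        have h2 : ((m : ℝ) ^ k / (k.factorial : ℝ)) * x ^ k = ((m : ℝ) * x) ^ k / (k.factorial : ℝ) := by
          rw [mul_pow]; ring
        rw [h2] at h1
        refine h1.trans ?_
        have hfac : (0 : ℝ) < (k.factorial : ℝ) := by exact_mod_cast k.factorial_pos
        have hkdecomp : k = κ + (k - κ) := by omega
        have hpowle : ((m : ℝ) * x) ^ (k - κ) ≤ (κ : ℝ) ^ (k - κ) :=
          pow_le_pow_left₀ hmxnn hmx _
        have hRHS : ((m : ℝ) * x) ^ κ / (κ : ℝ) ^ κ * ((κ : ℝ) ^ k / (k.factorial : ℝ))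
            = ((m : ℝ) * x) ^ κ * (κ : ℝ) ^ (k - κ) / (k.factorial : ℝ) := by
          rw [hkdecomp, pow_add]
          field_simp
          rw [Nat.add_sub_cancel_left]
        rw [hRHS, hkdecomp, pow_add]
        simp only [Nat.add_sub_cancel_left]
        gcongr
    _ = ((m : ℝ) * x) ^ κ / (κ : ℝ) ^ κ * ∑ k ∈ Finset.Icc κ m, (κ : ℝ) ^ k / (k.factorial : ℝ) := by
        rw [Finset.mul_sum]
    _ ≤ ((m : ℝ) * x) ^ κ / (κ : ℝ) ^ κ * Real.exp 1 ^ κ := by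
        refine mul_le_mul_of_nonneg_left ?_ (div_nonneg (pow_nonneg hmxnn κ) (pow_nonneg hκpos.le κ))
        calc ∑ k ∈ Finset.Icc κ m, (κ : ℝ) ^ k / (k.factorial : ℝ)
            ≤ ∑ k ∈ Finset.range (m + 1), (κ : ℝ) ^ k / (k.factorial : ℝ) := by
              refine Finset.sum_le_sum_of_subset_of_nonneg ?_ ?_
              · intro k hk
                rw [Finset.mem_Icc] at hk
                rw [Finset.mem_range]; omega
              · intro k _ _
                positivity
          _ ≤ Real.exp 1 ^ κ := by
              refine (Real.sum_le_exp_of_nonneg hκpos.le _).trans_eq ?_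
              rw [← Real.exp_nat_mul]; norm_num
    _ = (Real.exp 1 * (m : ℝ) * x / (κ : ℝ)) ^ κ := by
        rw [div_pow, mul_pow, mul_pow]
        ring

end Aux

/-- Mean square truncation error for uncorrelated symmetric parameters:
if each `μ_i` is a symmetric probability measure on `ℝ` with `∫ sin² dμ_i ≤ σ²` and
`σ² ≤ κ/m`, then for any coefficients `d_ω ∈ [−1,1]`,
`∫ (Σ_{#sin(ω) ≥ κ} Φ_ω(α) d_ω)² dμ(α) ≤ (e m σ²/κ)^κ`. -/
theorem mse_truncation_uncorrelated (m κ : ℕ) (hκ1 : 1 ≤ κ) (hκm : κ ≤ m)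
    (σ : ℝ) (hσ : 0 ≤ σ) (hσ2 : σ ^ 2 ≤ (κ : ℝ) / (m : ℝ))
    (μ : Fin m → Measure ℝ) [∀ i, IsProbabilityMeasure (μ i)]
    (hsymm : ∀ i, (μ i).map (fun t => -t) = μ i)
    (hvar : ∀ i, ∫ t, Real.sin t ^ 2 ∂(μ i) ≤ σ ^ 2)
    (d : (Fin m → Bool) → ℝ) (hd : ∀ ω, |d ω| ≤ 1) :
    ∫ α, (∑ ω ∈ Finset.univ.filter (fun ω => κ ≤ numSin m ω),
          pathCoeff m ω α * d ω) ^ 2 ∂(Measure.pi μ)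
      ≤ (Real.exp 1 * (m : ℝ) * σ ^ 2 / (κ : ℝ)) ^ κ := by
  set S : Finset (Fin m → Bool) := Finset.univ.filter (fun ω => κ ≤ numSin m ω) with hS
  -- basic measurability/boundedness facts
  have hpathmeas : ∀ ω : Fin m → Bool, Measurable (pathCoeff m ω) := by
    intro ω
    rw [show pathCoeff m ω = fun α => ∏ i, phiB (ω i) (α i) from rfl]
    exact Finset.measurable_prod _ (fun i _ => (phiB_measurable (ω i)).comp (measurable_pi_apply i))
  have habs_path : ∀ (ω : Fin m → Bool) (α : Fin m → ℝ), |pathCoeff m ω α| ≤ 1 := by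
    intro ω α
    rw [pathCoeff_eq, Finset.abs_prod]
    exact Finset.prod_le_one (fun i _ => abs_nonneg _) (fun i _ => abs_phiB_le _ _)
  -- integrability of pairwise products
  have hint : ∀ ω ω' : Fin m → Bool,
      Integrable (fun α => (pathCoeff m ω α * d ω) * (pathCoeff m ω' α * d ω'))
        (Measure.pi μ) := by
    intro ω ω'
    refine integrable_of_bdd (C := 1)
      (((hpathmeas ω).mul_const _).mul ((hpathmeas ω').mul_const _)) (fun α => ?_)
    rw [abs_mul, abs_mul, abs_mul]
    have h1 := habs_path ω α
    have h2 := habs_path ω' α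
    have h3 := hd ω
    have h4 := hd ω'
    have := mul_le_one₀ (mul_le_one₀ h1 (abs_nonneg _) h3) (by positivity)
      (mul_le_one₀ h2 (abs_nonneg _) h4)
    simpa using this
  -- the per-pair integral
  have key : ∀ ω ω' : Fin m → Bool,
      ∫ α, (pathCoeff m ω α * d ω) * (pathCoeff m ω' α * d ω') ∂(Measure.pi μ)
        = (d ω * d ω') * ∏ i, ∫ t, phiB (ω i) t * phiB (ω' i) t ∂(μ i) := by
    intro ω ω'
    have hpt : (fun α => (pathCoeff m ω α * d ω) * (pathCoeff m ω' α * d ω'))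
        = fun α => (∏ i, (fun i t => phiB (ω i) t * phiB (ω' i) t) i (α i)) * (d ω * d ω') := by
      funext α
      simp only
      rw [Finset.prod_mul_distrib]
      rw [pathCoeff_eq, pathCoeff_eq]
      ring
    rw [hpt, integral_mul_const,
      integral_pi_prod μ (fun i t => phiB (ω i) t * phiB (ω' i) t)]
    ring
  -- cross terms vanish
  have hcross : ∀ ω ω' : Fin m → Bool, ω ≠ ω' →
      (d ω * d ω') * ∏ i, ∫ t, phiB (ω i) t * phiB (ω' i) t ∂(μ i) = 0 := by
    intro ω ω' hne
    obtain ⟨i0, hi0⟩ := Function.ne_iff.mp hne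
    have hzero : ∫ t, phiB (ω i0) t * phiB (ω' i0) t ∂(μ i0) = 0 := by
      cases h1 : ω i0 <;> cases h2 : ω' i0
      · exact absurd (h1.trans h2.symm) hi0
      · rw [phiB_false, phiB_true]
        have hc : ∫ t, Real.cos t * Real.sin t ∂(μ i0) = ∫ t, Real.sin t * Real.cos t ∂(μ i0) :=
          integral_congr_ae (Filter.Eventually.of_forall fun t => mul_comm _ _)
        rw [hc]
        exact sin_cos_zero (μ i0) (hsymm i0)
      · rw [phiB_true, phiB_false]
        exact sin_cos_zero (μ i0) (hsymm i0)
      · exact absurd (h1.trans h2.symm) hi0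
    rw [Finset.prod_eq_zero (Finset.mem_univ i0) hzero, mul_zero]
  -- expand the square
  have expand : ∫ α, (∑ ω ∈ S, pathCoeff m ω α * d ω) ^ 2 ∂(Measure.pi μ)
      = ∑ ω ∈ S, ∑ ω' ∈ S,
          (d ω * d ω') * ∏ i, ∫ t, phiB (ω i) t * phiB (ω' i) t ∂(μ i) := by
    have hptsq : (fun α => (∑ ω ∈ S, pathCoeff m ω α * d ω) ^ 2)
        = fun α => ∑ ω ∈ S, ∑ ω' ∈ S,
            (pathCoeff m ω α * d ω) * (pathCoeff m ω' α * d ω') := by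
      funext α
      rw [sq, Finset.sum_mul_sum]
    rw [hptsq, integral_finset_sum _ (fun ω _ => integrable_finset_sum _ (fun ω' _ => hint ω ω'))]
    refine Finset.sum_congr rfl fun ω _ => ?_
    rw [integral_finset_sum _ (fun ω' _ => hint ω ω')]
    exact Finset.sum_congr rfl fun ω' _ => key ω ω'
  rw [expand]
  -- reduce to the diagonal
  have hdiag : ∑ ω ∈ S, ∑ ω' ∈ S,
      (d ω * d ω') * ∏ i, ∫ t, phiB (ω i) t * phiB (ω' i) t ∂(μ i)
      = ∑ ω ∈ S, (d ω * d ω) * ∏ i, ∫ t, phiB (ω i) t * phiB (ω i) t ∂(μ i) := by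
    refine Finset.sum_congr rfl fun ω hω => ?_
    exact Finset.sum_eq_single_of_mem ω hω (fun ω' _ hne => hcross ω ω' (fun h => hne h.symm))
  rw [hdiag]
  -- bound each diagonal term
  have hJnn : ∀ (i : Fin m) (b : Bool), 0 ≤ ∫ t, phiB b t * phiB b t ∂(μ i) :=
    fun i b => integral_nonneg (fun t => mul_self_nonneg _)
  have hJσ : ∀ i : Fin m, ∫ t, phiB true t * phiB true t ∂(μ i) ≤ σ ^ 2 := by
    intro i
    have h : (fun t => phiB true t * phiB true t) = fun t => Real.sin t ^ 2 := by
      funext t; rw [sq]; rfl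
    rw [h]
    exact hvar i
  have hJ1 : ∀ (i : Fin m) (b : Bool), ∫ t, phiB b t * phiB b t ∂(μ i) ≤ 1 := by
    intro i b
    have hle : ∀ t, phiB b t * phiB b t ≤ 1 := by
      intro t
      have := abs_phiB_le b t
      calc phiB b t * phiB b t = |phiB b t| * |phiB b t| := (abs_mul_abs_self _).symm
        _ ≤ 1 * 1 := mul_le_mul this this (abs_nonneg _) zero_le_one
        _ = 1 := one_mul 1
    calc ∫ t, phiB b t * phiB b t ∂(μ i) ≤ ∫ _, (1 : ℝ) ∂(μ i) := by
          refine integral_mono ?_ (integrable_const 1) hle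
          exact integrable_of_bdd (C := 1) ((phiB_measurable b).mul (phiB_measurable b))
            (fun t => by rw [abs_mul]; exact mul_le_one₀ (abs_phiB_le b t) (abs_nonneg _) (abs_phiB_le b t))
      _ = 1 := by simp
  have hterm : ∀ ω ∈ S, (d ω * d ω) * ∏ i, ∫ t, phiB (ω i) t * phiB (ω i) t ∂(μ i)
      ≤ (σ ^ 2) ^ numSin m ω := by
    intro ω _
    have hP : (0 : ℝ) ≤ ∏ i, ∫ t, phiB (ω i) t * phiB (ω i) t ∂(μ i) :=
      Finset.prod_nonneg fun i _ => hJnn i (ω i)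
    have hdd : d ω * d ω ≤ 1 := by
      calc d ω * d ω = |d ω| * |d ω| := (abs_mul_abs_self _).symm
        _ ≤ 1 * 1 := mul_le_mul (hd ω) (hd ω) (abs_nonneg _) zero_le_one
        _ = 1 := one_mul 1
    calc (d ω * d ω) * ∏ i, ∫ t, phiB (ω i) t * phiB (ω i) t ∂(μ i)
        ≤ 1 * ∏ i, ∫ t, phiB (ω i) t * phiB (ω i) t ∂(μ i) :=
          mul_le_mul_of_nonneg_right hdd hP
      _ = ∏ i, ∫ t, phiB (ω i) t * phiB (ω i) t ∂(μ i) := one_mul _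
      _ ≤ ∏ i, (if ω i then σ ^ 2 else 1) := by
          refine Finset.prod_le_prod (fun i _ => hJnn i (ω i)) (fun i _ => ?_)
          by_cases h : ω i
          · rw [if_pos h, show ω i = true from h]
            exact hJσ i
          · rw [if_neg h]
            exact hJ1 i (ω i)
      _ = (σ ^ 2) ^ numSin m ω := by
          rw [Finset.prod_ite, Finset.prod_const, Finset.prod_const_one, mul_one, numSin]
  -- combinatorial bound
  have hmpos : (0 : ℝ) < m := by
    have : 1 ≤ m := le_trans hκ1 hκm
    exact_mod_cast Nat.lt_of_lt_of_le Nat.zero_lt_one this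
  have hmx : (m : ℝ) * σ ^ 2 ≤ (κ : ℝ) := by
    rw [mul_comm]
    exact (le_div_iff₀ hmpos).mp hσ2
  calc ∑ ω ∈ S, (d ω * d ω) * ∏ i, ∫ t, phiB (ω i) t * phiB (ω i) t ∂(μ i)
      ≤ ∑ ω ∈ S, (σ ^ 2) ^ numSin m ω := Finset.sum_le_sum hterm
    _ ≤ (Real.exp 1 * (m : ℝ) * σ ^ 2 / (κ : ℝ)) ^ κ :=
        tail_bound m κ hκ1 (σ ^ 2) (sq_nonneg σ) hmx
end

section
/- Let m, κ ∈ ℕ with 1 ≤ κ ≤ m and let r ≥ 0 with r ≤ κ/m. Let d : {1, −1}^m → [−1, 1] be any family of coefficients. Then for every α ∈ [−r, r]^m, Σ_{ω ∈ {1,−1}^m : #sin(ω) ≥ κ} |Φ_ω(α)| ≤ (e m r / κ)^κ, and in particular | Σ_{ω ∈ {1,−1}^m : #sin(ω) ≥ κ} Φ_ω(α) d_ω | ≤ (e m r / κ)^κ. -/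
lemma sum_pow_numSinAux (m : ℕ) (x : ℝ) :
    (∑ ω : Fin m → Bool, x ^ numSin m ω) = (1 + x) ^ m := by
  have h := Fintype.prod_sum (fun (_ : Fin m) (b : Bool) => if b then x else (1:ℝ))
  norm_num at h
  rw [add_comm x 1] at h
  unfold numSin
  rw [h]
  apply Finset.sum_congr rfl
  intro ω _
  rw [Finset.prod_ite, Finset.prod_const, Finset.prod_const_one, mul_one]

lemma pathCoeff_abs_le (m : ℕ) (r : ℝ) (hr : 0 ≤ r) (ω : Fin m → Bool)
    (α : Fin m → ℝ) (hα : ∀ i, |α i| ≤ r) :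
    |pathCoeff m ω α| ≤ r ^ numSin m ω := by
  rw [pathCoeff, Finset.abs_prod]
  have h1 : (∏ i, |if ω i then Real.sin (α i) else Real.cos (α i)|)
      ≤ ∏ i, (if ω i then r else 1) := by
    apply Finset.prod_le_prod (fun i _ => abs_nonneg _)
    intro i _
    by_cases h : ω i
    · simp only [h, if_true]
      exact le_trans (Real.abs_sin_le_abs) (hα i)
    · simp only [h, if_false]
      exact Real.abs_cos_le_one _
  calc (∏ i, |if ω i then Real.sin (α i) else Real.cos (α i)|)
      ≤ ∏ i, (if ω i then r else 1) := h1
    _ = r ^ numSin m ω := by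
        rw [Finset.prod_ite, Finset.prod_const, Finset.prod_const_one, mul_one, numSin]

/-- Worst-case truncation error: if `r ≤ κ/m`, then for every
`α ∈ [−r, r]^m`, `Σ_{#sin(ω) ≥ κ} |Φ_ω(α)| ≤ (e m r/κ)^κ`, and in particular
`|Σ_{#sin(ω) ≥ κ} Φ_ω(α) d_ω| ≤ (e m r/κ)^κ` for any coefficients `d_ω ∈ [−1,1]`. -/
theorem worst_case_truncation_error (m κ : ℕ) (hκ1 : 1 ≤ κ) (hκm : κ ≤ m)
    (r : ℝ) (hr : 0 ≤ r) (hrκ : r ≤ (κ : ℝ) / (m : ℝ))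
    (d : (Fin m → Bool) → ℝ) (hd : ∀ ω, |d ω| ≤ 1)
    (α : Fin m → ℝ) (hα : ∀ i, |α i| ≤ r) :
    (∑ ω ∈ Finset.univ.filter (fun ω => κ ≤ numSin m ω), |pathCoeff m ω α|)
        ≤ (Real.exp 1 * (m : ℝ) * r / (κ : ℝ)) ^ κ ∧
      |∑ ω ∈ Finset.univ.filter (fun ω => κ ≤ numSin m ω), pathCoeff m ω α * d ω|
        ≤ (Real.exp 1 * (m : ℝ) * r / (κ : ℝ)) ^ κ := by
  have hm1 : 1 ≤ m := le_trans hκ1 hκm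
  have hmpos : (0:ℝ) < m := by exact_mod_cast hm1
  have hκpos : (0:ℝ) < κ := by exact_mod_cast hκ1
  set c : ℝ := (κ : ℝ) / (m : ℝ) with hc
  have hcpos : 0 < c := div_pos hκpos hmpos
  -- key pointwise bound for exponents ≥ κ
  have hkey : ∀ n : ℕ, κ ≤ n → r ^ n ≤ (r / c) ^ κ * c ^ n := by
    intro n hn
    have h1 : r ^ n = r ^ κ * r ^ (n - κ) := by
      rw [← pow_add, Nat.add_sub_cancel' hn]
    have h2 : (r / c) ^ κ * c ^ n = r ^ κ * c ^ (n - κ) := by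
      have hcc : c ^ n = c ^ κ * c ^ (n - κ) := by
        rw [← pow_add, Nat.add_sub_cancel' hn]
      rw [hcc, div_pow]
      field_simp
    rw [h1, h2]
    exact mul_le_mul_of_nonneg_left (pow_le_pow_left₀ hr hrκ _) (pow_nonneg hr _)
  -- sum bound
  have hsum : (∑ ω ∈ Finset.univ.filter (fun ω => κ ≤ numSin m ω), |pathCoeff m ω α|)
      ≤ (r / c) ^ κ * (1 + c) ^ m := by
    calc (∑ ω ∈ Finset.univ.filter (fun ω => κ ≤ numSin m ω), |pathCoeff m ω α|)
        ≤ ∑ ω ∈ Finset.univ.filter (fun ω => κ ≤ numSin m ω),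
            (r / c) ^ κ * c ^ numSin m ω := by
          apply Finset.sum_le_sum
          intro ω hω
          rw [Finset.mem_filter] at hω
          exact le_trans (pathCoeff_abs_le m r hr ω α hα) (hkey _ hω.2)
      _ ≤ ∑ ω : Fin m → Bool, (r / c) ^ κ * c ^ numSin m ω := by
          apply Finset.sum_le_sum_of_subset_of_nonneg (Finset.filter_subset _ _)
          intro ω _ _
          positivity
      _ = (r / c) ^ κ * (1 + c) ^ m := by
          rw [← Finset.mul_sum, sum_pow_numSinAux]
  -- (1+c)^m ≤ (e)^κ
  have hexp : (1 + c) ^ m ≤ Real.exp 1 ^ κ := by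
    have h1 : (1 + c) ^ m ≤ Real.exp c ^ m :=
      pow_le_pow_left₀ (by positivity) (by linarith [Real.add_one_le_exp c]) m
    have h2 : Real.exp c ^ m = Real.exp 1 ^ κ := by
      rw [← Real.exp_nat_mul, ← Real.exp_nat_mul]
      congr 1
      rw [hc]
      field_simp [hc]
    rw [← h2]; exact h1
  have htarget : (Real.exp 1 * (m : ℝ) * r / (κ : ℝ)) ^ κ
      = (r / c) ^ κ * Real.exp 1 ^ κ := by
    rw [← mul_pow]
    congr 1
    rw [hc]
    field_simp [hc]
  have hmain : (∑ ω ∈ Finset.univ.filter (fun ω => κ ≤ numSin m ω), |pathCoeff m ω α|)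
      ≤ (Real.exp 1 * (m : ℝ) * r / (κ : ℝ)) ^ κ := by
    rw [htarget]
    calc _ ≤ (r / c) ^ κ * (1 + c) ^ m := hsum
      _ ≤ (r / c) ^ κ * Real.exp 1 ^ κ :=
          mul_le_mul_of_nonneg_left hexp (by positivity)
  refine ⟨hmain, ?_⟩
  calc |∑ ω ∈ Finset.univ.filter (fun ω => κ ≤ numSin m ω), pathCoeff m ω α * d ω|
      ≤ ∑ ω ∈ Finset.univ.filter (fun ω => κ ≤ numSin m ω), |pathCoeff m ω α * d ω| :=
        Finset.abs_sum_le_sum_abs _ _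
    _ ≤ ∑ ω ∈ Finset.univ.filter (fun ω => κ ≤ numSin m ω), |pathCoeff m ω α| := by
        apply Finset.sum_le_sum
        intro ω _
        rw [abs_mul]
        exact mul_le_of_le_one_right (abs_nonneg _) (hd ω)
    _ ≤ _ := hmain
end

section
/- Let m, κ ∈ ℕ with 1 ≤ κ ≤ m and let r > 0 with r ≤ κ/m. Let d : {1, −1}^m → [−1, 1] be any family of coefficients. Then, with a single parameter t used in all m slots (maximally correlated angles), the average absolute error satisfies (1/(2r)) ∫_{−r}^{r} | Σ_{ω ∈ {1,−1}^m : #sin(ω) ≥ κ} cos(t)^{m − #sin(ω)} · sin(t)^{#sin(ω)} · d_ω | dt ≤ (e m r / κ)^κ / (κ + 1). -/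
lemma card_numSin_eq (m k : ℕ) :
    (Finset.univ.filter (fun ω : Fin m → Bool => numSin m ω = k)).card = m.choose k := by
  classical
  have h : (Finset.univ.filter (fun ω : Fin m → Bool => numSin m ω = k)).card
      = (Finset.powersetCard k (Finset.univ : Finset (Fin m))).card :=
    Finset.card_bij' (fun ω _ => Finset.univ.filter (fun i => ω i = true))
      (fun s _ => fun i => decide (i ∈ s))
      (by
        intro ω hω
        simp only [Finset.mem_filter, Finset.mem_univ, true_and] at hω
        rw [Finset.mem_powersetCard]
        exact ⟨Finset.subset_univ _, hω⟩)
      (by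
        intro s hs
        rw [Finset.mem_powersetCard] at hs
        simp only [Finset.mem_filter, Finset.mem_univ, true_and]
        have heq : numSin m (fun i => decide (i ∈ s)) = s.card := by
          unfold numSin
          congr 1
          ext i
          simp
        rw [heq, hs.2])
      (by
        intro ω hω
        funext i
        simp)
      (by
        intro s hs
        ext i
        simp)
  rw [h, Finset.card_powersetCard, Finset.card_univ, Fintype.card_fin]

lemma numSin_le (m : ℕ) (ω : Fin m → Bool) : numSin m ω ≤ m := by
  simpa [numSin] using (Finset.card_filter_le Finset.univ (fun i => ω i = true)).trans
    (by simp)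

/-- Pointwise bound on the truncated sum. -/
lemma pointwise_bound (m κ : ℕ) (hκ1 : 1 ≤ κ) (hκm : κ ≤ m)
    (t : ℝ) (ht : (m : ℝ) * |t| ≤ (κ : ℝ))
    (d : (Fin m → Bool) → ℝ) (hd : ∀ ω, |d ω| ≤ 1) :
    |∑ ω ∈ Finset.univ.filter (fun ω => κ ≤ numSin m ω),
        Real.cos t ^ (m - numSin m ω) * Real.sin t ^ (numSin m ω) * d ω|
      ≤ (Real.exp 1 * (m : ℝ) / (κ : ℝ)) ^ κ * |t| ^ κ := by
  classical
  have hκpos : (0 : ℝ) < κ := by exact_mod_cast hκ1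
  have habs : ∀ ω ∈ Finset.univ.filter (fun ω => κ ≤ numSin m ω),
      |Real.cos t ^ (m - numSin m ω) * Real.sin t ^ (numSin m ω) * d ω|
        ≤ |t| ^ (numSin m ω) := by
    intro ω _
    rw [abs_mul, abs_mul, abs_pow, abs_pow]
    calc |Real.cos t| ^ (m - numSin m ω) * |Real.sin t| ^ (numSin m ω) * |d ω|
        ≤ 1 ^ (m - numSin m ω) * |t| ^ (numSin m ω) * 1 := by
          have hc : |Real.cos t| ^ (m - numSin m ω) ≤ 1 ^ (m - numSin m ω) :=
            pow_le_pow_left₀ (abs_nonneg _) (Real.abs_cos_le_one t) _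
          have hs : |Real.sin t| ^ (numSin m ω) ≤ |t| ^ (numSin m ω) :=
            pow_le_pow_left₀ (abs_nonneg _) Real.abs_sin_le_abs _
          have := mul_le_mul (mul_le_mul hc hs (by positivity) (by positivity))
            (hd ω) (abs_nonneg _) (by positivity)
          exact this
      _ = |t| ^ (numSin m ω) := by ring
  have h1 : |∑ ω ∈ Finset.univ.filter (fun ω => κ ≤ numSin m ω),
      Real.cos t ^ (m - numSin m ω) * Real.sin t ^ (numSin m ω) * d ω|
      ≤ ∑ ω ∈ Finset.univ.filter (fun ω => κ ≤ numSin m ω), |t| ^ (numSin m ω) :=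
    (Finset.abs_sum_le_sum_abs _ _).trans (Finset.sum_le_sum habs)
  -- group by numSin
  have h2 : ∑ ω ∈ Finset.univ.filter (fun ω => κ ≤ numSin m ω), |t| ^ (numSin m ω)
      = ∑ k ∈ Finset.Icc κ m, (m.choose k : ℝ) * |t| ^ k := by
    rw [← Finset.sum_fiberwise_of_maps_to (g := numSin m) (t := Finset.Icc κ m)
      (fun ω hω => by
        simp only [Finset.mem_filter, Finset.mem_univ, true_and] at hω
        exact Finset.mem_Icc.mpr ⟨hω, numSin_le m ω⟩)]
    refine Finset.sum_congr rfl (fun k hk => ?_)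
    rw [Finset.filter_filter]
    have : (Finset.univ.filter (fun ω : Fin m → Bool => κ ≤ numSin m ω ∧ numSin m ω = k))
        = Finset.univ.filter (fun ω => numSin m ω = k) := by
      apply Finset.filter_congr
      intro ω _
      simp only [Finset.mem_Icc] at hk
      constructor
      · exact fun h => h.2
      · exact fun h => ⟨h ▸ hk.1, h⟩
    rw [this]
    rw [Finset.sum_congr rfl (fun ω hω => by
      simp only [Finset.mem_filter] at hω
      rw [hω.2])]
    rw [Finset.sum_const, card_numSin_eq, nsmul_eq_mul]
  -- bound each binomial term
  have h3 : ∑ k ∈ Finset.Icc κ m, (m.choose k : ℝ) * |t| ^ k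
      ≤ ∑ k ∈ Finset.Icc κ m, ((m : ℝ) * |t|) ^ κ / (κ : ℝ) ^ κ * ((κ : ℝ) ^ k / k.factorial) := by
    refine Finset.sum_le_sum (fun k hk => ?_)
    simp only [Finset.mem_Icc] at hk
    have hb : (m.choose k : ℝ) ≤ (m : ℝ) ^ k / k.factorial := Nat.choose_le_pow_div k m
    have hbt : (m.choose k : ℝ) * |t| ^ k ≤ ((m : ℝ) * |t|) ^ k / k.factorial := by
      rw [mul_pow]
      calc (m.choose k : ℝ) * |t| ^ k ≤ ((m : ℝ) ^ k / k.factorial) * |t| ^ k :=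
            mul_le_mul_of_nonneg_right hb (by positivity)
        _ = (m : ℝ) ^ k * |t| ^ k / k.factorial := by ring
    refine hbt.trans ?_
    rw [div_mul_div_comm, div_le_div_iff₀ (by positivity) (by positivity)]
    have key : ((m : ℝ) * |t|) ^ k * (κ : ℝ) ^ κ
        ≤ ((m : ℝ) * |t|) ^ κ * (κ : ℝ) ^ k := by
      calc ((m : ℝ) * |t|) ^ k * (κ : ℝ) ^ κ
          = ((m : ℝ) * |t|) ^ κ * (((m : ℝ) * |t|) ^ (k - κ) * (κ : ℝ) ^ κ) := by
            rw [← mul_assoc, ← pow_add]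
            congr 2
            omega
        _ ≤ ((m : ℝ) * |t|) ^ κ * ((κ : ℝ) ^ (k - κ) * (κ : ℝ) ^ κ) := by
            gcongr
        _ = ((m : ℝ) * |t|) ^ κ * (κ : ℝ) ^ k := by
            rw [← pow_add]
            congr 2
            omega
    calc ((m : ℝ) * |t|) ^ k * ((κ : ℝ) ^ κ * (k.factorial : ℝ))
        = ((m : ℝ) * |t|) ^ k * (κ : ℝ) ^ κ * (k.factorial : ℝ) := by ring
      _ ≤ ((m : ℝ) * |t|) ^ κ * (κ : ℝ) ^ k * (k.factorial : ℝ) :=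
          mul_le_mul_of_nonneg_right key (by positivity)
  -- sum of κ^k/k! bounded by exp κ
  have h4 : ∑ k ∈ Finset.Icc κ m, ((κ : ℝ) ^ k / k.factorial) ≤ Real.exp κ := by
    calc ∑ k ∈ Finset.Icc κ m, ((κ : ℝ) ^ k / k.factorial)
        ≤ ∑ k ∈ Finset.range (m + 1), ((κ : ℝ) ^ k / k.factorial) := by
          refine Finset.sum_le_sum_of_subset_of_nonneg ?_ (fun k _ _ => by positivity)
          intro k hk
          simp only [Finset.mem_Icc] at hk
          simp only [Finset.mem_range]
          omega
      _ ≤ Real.exp κ := Real.sum_le_exp_of_nonneg (by positivity) _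
  have h5 : ∑ k ∈ Finset.Icc κ m, ((m : ℝ) * |t|) ^ κ / (κ : ℝ) ^ κ * ((κ : ℝ) ^ k / k.factorial)
      ≤ ((m : ℝ) * |t|) ^ κ / (κ : ℝ) ^ κ * Real.exp κ := by
    rw [← Finset.mul_sum]
    gcongr
  have hexp : Real.exp (κ : ℝ) = Real.exp 1 ^ κ := by
    rw [← Real.exp_nat_mul, mul_one]
  calc |∑ ω ∈ Finset.univ.filter (fun ω => κ ≤ numSin m ω),
        Real.cos t ^ (m - numSin m ω) * Real.sin t ^ (numSin m ω) * d ω|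
      ≤ ((m : ℝ) * |t|) ^ κ / (κ : ℝ) ^ κ * Real.exp κ :=
        h1.trans (h2 ▸ h3.trans h5)
    _ = (Real.exp 1 * (m : ℝ) / (κ : ℝ)) ^ κ * |t| ^ κ := by
        rw [hexp, div_pow, mul_pow, mul_pow]
        field_simp

/-- Average truncation error for maximally correlated angles: with a
single parameter `t` uniform on `[−r, r]` used in all `m` slots and `r ≤ κ/m`,
`(1/(2r)) ∫_{−r}^{r} |Σ_{#sin(ω) ≥ κ} cos(t)^{m−#sin(ω)} sin(t)^{#sin(ω)} d_ω| dt
  ≤ (e m r/κ)^κ / (κ+1)` for any coefficients `d_ω ∈ [−1,1]`. -/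
theorem correlated_average_truncation_error (m κ : ℕ) (hκ1 : 1 ≤ κ) (hκm : κ ≤ m)
    (r : ℝ) (hr : 0 < r) (hrκ : r ≤ (κ : ℝ) / (m : ℝ))
    (d : (Fin m → Bool) → ℝ) (hd : ∀ ω, |d ω| ≤ 1) :
    (1 / (2 * r)) * (∫ t in (-r)..r,
        |∑ ω ∈ Finset.univ.filter (fun ω => κ ≤ numSin m ω),
          Real.cos t ^ (m - numSin m ω) * Real.sin t ^ (numSin m ω) * d ω|)
      ≤ (Real.exp 1 * (m : ℝ) * r / (κ : ℝ)) ^ κ / ((κ : ℝ) + 1) := by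
  classical
  have hm1 : 1 ≤ m := le_trans hκ1 hκm
  have hmpos : (0 : ℝ) < m := by exact_mod_cast hm1
  have hκpos : (0 : ℝ) < κ := by exact_mod_cast hκ1
  set C : ℝ := (Real.exp 1 * (m : ℝ) / (κ : ℝ)) ^ κ with hC
  have hCpos : 0 < C := by positivity
  set F : ℝ → ℝ := fun t =>
    |∑ ω ∈ Finset.univ.filter (fun ω => κ ≤ numSin m ω),
      Real.cos t ^ (m - numSin m ω) * Real.sin t ^ (numSin m ω) * d ω| with hF
  have hFcont : Continuous F := by
    apply Continuous.abs
    exact continuous_finset_sum _ (fun ω _ =>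
      ((Real.continuous_cos.pow _).mul (Real.continuous_sin.pow _)).mul continuous_const)
  have hGcont : Continuous (fun t : ℝ => C * |t| ^ κ) :=
    continuous_const.mul (continuous_abs.pow _)
  -- pointwise bound on [-r, r]
  have hpt : ∀ t ∈ Set.Icc (-r) r, F t ≤ C * |t| ^ κ := by
    intro t ht
    have htr : |t| ≤ r := abs_le.mpr ⟨ht.1, ht.2⟩
    have hmt : (m : ℝ) * |t| ≤ (κ : ℝ) := by
      calc (m : ℝ) * |t| ≤ (m : ℝ) * r := by gcongr
        _ ≤ (m : ℝ) * ((κ : ℝ) / (m : ℝ)) := by gcongr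
        _ = (κ : ℝ) := by field_simp
    exact pointwise_bound m κ hκ1 hκm t hmt d hd
  -- bound the integral
  have hint : (∫ t in (-r)..r, F t) ≤ ∫ t in (-r)..r, C * |t| ^ κ := by
    apply intervalIntegral.integral_mono_on (by linarith)
      (hFcont.intervalIntegrable _ _) (hGcont.intervalIntegrable _ _) hpt
  -- compute the bounding integral
  have habs_pow : (∫ t in (-r)..r, |t| ^ κ) = 2 * (r ^ (κ + 1) / (κ + 1)) := by
    have hsplit : (∫ t in (-r)..r, |t| ^ κ)
        = (∫ t in (-r)..(0:ℝ), |t| ^ κ) + ∫ t in (0:ℝ)..r, |t| ^ κ := by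
      rw [intervalIntegral.integral_add_adjacent_intervals]
      · exact (continuous_abs.pow _).intervalIntegrable _ _
      · exact (continuous_abs.pow _).intervalIntegrable _ _
    have hpos : (∫ t in (0:ℝ)..r, |t| ^ κ) = r ^ (κ + 1) / (κ + 1) := by
      rw [intervalIntegral.integral_congr (g := fun t => t ^ κ)
        (fun t ht => by
          rw [Set.uIcc_of_le (by linarith : (0:ℝ) ≤ r)] at ht
          simp [abs_of_nonneg ht.1]),
        integral_pow]
      simp
    have hneg : (∫ t in (-r)..(0:ℝ), |t| ^ κ) = r ^ (κ + 1) / (κ + 1) := by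
      have : (∫ t in (0:ℝ)..r, |(-t)| ^ κ) = ∫ t in (-r)..(0:ℝ), |t| ^ κ := by
        simpa using intervalIntegral.integral_comp_neg (a := (0:ℝ)) (b := r)
          (f := fun t => |t| ^ κ)
      rw [← this]
      simp only [abs_neg]
      exact hpos
    rw [hsplit, hpos, hneg]
    ring
  have hint2 : (∫ t in (-r)..r, C * |t| ^ κ) = C * (2 * (r ^ (κ + 1) / (κ + 1))) := by
    rw [intervalIntegral.integral_const_mul, habs_pow]
  have hfinal : (1 / (2 * r)) * (∫ t in (-r)..r, F t)
      ≤ (1 / (2 * r)) * (C * (2 * (r ^ (κ + 1) / (κ + 1)))) := by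
    apply mul_le_mul_of_nonneg_left _ (by positivity)
    rw [← hint2]
    exact hint
  refine hfinal.trans_eq ?_
  have hrκ1 : (0 : ℝ) < (κ : ℝ) + 1 := by positivity
  have : (Real.exp 1 * (m : ℝ) * r / (κ : ℝ)) ^ κ = C * r ^ κ := by
    rw [hC, div_pow, div_pow, mul_pow, mul_pow]
    ring
  rw [this, pow_succ]
  field_simp
end

section
/- Let m ≥ 1 and let u_1, …, u_m be independent random variables, each uniformly distributed on [−1, 1]. Then for every k ∈ ℕ, E[ ( Σ_{i=1}^{m} u_i )^{2k} ] ≤ (m/3)^k · (2k − 1)!!, i.e. the even moments of the standardized sum X_m = (Σ_{i=1}^m u_i)/√(m/3) are bounded by the corresponding moments of a standard Gaussian: E[X_m^{2k}] ≤ (2k − 1)!!. -/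
open MeasureTheory ProbabilityTheory

/-- Double factorial as a real product. -/
noncomputable def DD (k : ℕ) : ℝ := ∏ j ∈ Finset.range k, (2 * (j : ℝ) + 1)

lemma DD_pos (k : ℕ) : 0 < DD k := by
  unfold DD; positivity

lemma DD_succ (k : ℕ) : DD (k + 1) = DD k * (2 * (k : ℝ) + 1) := by
  unfold DD; rw [Finset.prod_range_succ]

lemma DD_mul_fact (k : ℕ) :
    DD k * (2 ^ k * (Nat.factorial k : ℝ)) = (Nat.factorial (2 * k) : ℝ) := by
  induction k with
  | zero => simp [DD]
  | succ n ih =>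
    have h2 : 2 * (n + 1) = (2 * n + 1) + 1 := by ring
    rw [DD_succ, h2, Nat.factorial_succ, Nat.factorial_succ, Nat.factorial_succ]
    push_cast
    rw [← ih]
    ring

lemma key_identity {k j : ℕ} (hj : j ≤ k) :
    ((2 * k).choose (2 * j) : ℝ) * DD j * DD (k - j) = (k.choose j : ℝ) * DD k := by
  have h2j : 2 * j ≤ 2 * k := by omega
  have hsub : 2 * k - 2 * j = 2 * (k - j) := by omega
  have hc1 : ((2 * k).choose (2 * j) : ℝ)
      = (Nat.factorial (2 * k) : ℝ) /
        ((Nat.factorial (2 * j) : ℝ) * (Nat.factorial (2 * (k - j)) : ℝ)) := by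
    rw [Nat.cast_choose ℝ h2j, hsub]
  have hc2 : (k.choose j : ℝ)
      = (Nat.factorial k : ℝ) / ((Nat.factorial j : ℝ) * (Nat.factorial (k - j) : ℝ)) :=
    Nat.cast_choose ℝ hj
  have e1 := DD_mul_fact j
  have e2 := DD_mul_fact (k - j)
  have e3 := DD_mul_fact k
  have hfj : (Nat.factorial j : ℝ) ≠ 0 := by positivity
  have hfkj : (Nat.factorial (k - j) : ℝ) ≠ 0 := by positivity
  have hfk : (Nat.factorial k : ℝ) ≠ 0 := by positivity
  have hf2j : (Nat.factorial (2 * j) : ℝ) ≠ 0 := by positivity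
  have hf2kj : (Nat.factorial (2 * (k - j)) : ℝ) ≠ 0 := by positivity
  have hpk : j + (k - j) = k := by omega
  have hp : (2 : ℝ) ^ k = 2 ^ j * 2 ^ (k - j) := by
    rw [← pow_add, hpk]
  have hDj := (DD_pos j).ne'
  have hDkj := (DD_pos (k - j)).ne'
  have h2j' : (2 : ℝ) ^ j ≠ 0 := by positivity
  have h2kj' : (2 : ℝ) ^ (k - j) ≠ 0 := by positivity
  rw [hc1, hc2, ← e1, ← e2, ← e3, hp]
  field_simp

lemma one_div_le_DD (i : ℕ) : 1 / (2 * (i : ℝ) + 1) ≤ DD i / 3 ^ i := by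
  induction i with
  | zero => simp [DD]
  | succ n ih =>
    have h1 : (0:ℝ) < 2 * (n : ℝ) + 1 := by positivity
    have h3 : DD (n + 1) / 3 ^ (n + 1) = (DD n / 3 ^ n) * ((2 * (n : ℝ) + 1) / 3) := by
      rw [DD_succ, pow_succ]; ring
    have h4 : (1 : ℝ) / 3 ≤ (DD n / 3 ^ n) * ((2 * (n : ℝ) + 1) / 3) := by
      calc (1:ℝ) / 3 = (1 / (2 * (n : ℝ) + 1)) * ((2 * (n : ℝ) + 1) / 3) := by
            field_simp
        _ ≤ (DD n / 3 ^ n) * ((2 * (n : ℝ) + 1) / 3) := by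
            apply mul_le_mul_of_nonneg_right ih; positivity
    rw [h3]
    refine le_trans ?_ h4
    rw [div_le_div_iff₀ (by push_cast; positivity) (by norm_num)]
    push_cast; nlinarith [Nat.cast_nonneg (α := ℝ) n]

lemma sum_range_even_odd (f : ℕ → ℝ) (k : ℕ) :
    ∑ j ∈ Finset.range (2 * k + 1), f j
      = ∑ i ∈ Finset.range (k + 1), f (2 * i) + ∑ i ∈ Finset.range k, f (2 * i + 1) := by
  induction k with
  | zero => simp
  | succ n ih =>
    have h : 2 * (n + 1) + 1 = (2 * n + 1) + 1 + 1 := by ring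
    rw [h, Finset.sum_range_succ, Finset.sum_range_succ, ih,
      Finset.sum_range_succ (f := fun i => f (2 * i)),
      Finset.sum_range_succ (f := fun i => f (2 * i + 1))]
    rw [Finset.sum_range_succ (f := fun i => f (2 * i)),
      Finset.sum_range_succ (f := fun i => f (2 * i))]
    have e2 : 2 * n + 1 + 1 = 2 * (n + 1) := by ring
    rw [e2]
    ring

lemma uniform_moment (n : ℕ) :
    ∫ x, x ^ n ∂((ENNReal.ofReal 2)⁻¹ • volume.restrict (Set.Icc (-1 : ℝ) 1))
      = if Even n then 1 / ((n : ℝ) + 1) else 0 := by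
  rw [integral_smul_measure]
  have h1 : ∫ x in Set.Icc (-1 : ℝ) 1, x ^ n
      = ∫ x in (-1 : ℝ)..1, x ^ n := by
    rw [MeasureTheory.integral_Icc_eq_integral_Ioc,
      intervalIntegral.integral_of_le (by norm_num : (-1 : ℝ) ≤ 1)]
  have h2 : ((ENNReal.ofReal 2)⁻¹).toReal = 1 / 2 := by
    rw [ENNReal.toReal_inv, ENNReal.toReal_ofReal (by norm_num)]
    norm_num
  rw [h1, integral_pow, h2]
  have hn1 : ((n : ℝ) + 1) ≠ 0 := by positivity
  rcases Nat.even_or_odd n with he | ho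
  · have : (-1 : ℝ) ^ (n + 1) = -1 := Odd.neg_one_pow (Even.add_one he)
    rw [this, if_pos he]
    rw [smul_eq_mul]; field_simp; norm_num
  · have : (-1 : ℝ) ^ (n + 1) = 1 := Even.neg_one_pow (Odd.add_one ho)
    rw [this, if_neg (by simpa [Nat.even_iff, Nat.odd_iff] using ho)]
    simp

/-- If `u_1, …, u_m` are independent random variables, each uniformly
distributed on `[−1, 1]`, then for every `k`,
`E[(Σ_i u_i)^{2k}] ≤ (m/3)^k (2k−1)!!`, where `(2k−1)!! = ∏_{j=1}^k (2j−1)` is the `2k`-th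
moment of a standard Gaussian. -/
theorem even_moments_sum_uniform_le_gaussian (m : ℕ) (hm : 1 ≤ m)
    {Ω : Type*} [MeasurableSpace Ω] (μ : Measure Ω) [IsProbabilityMeasure μ]
    (u : Fin m → Ω → ℝ) (hmeas : ∀ i, Measurable (u i))
    (hindep : iIndepFun u μ)
    (hlaw : ∀ i, Measure.map (u i) μ =
      (ENNReal.ofReal 2)⁻¹ • volume.restrict (Set.Icc (-1 : ℝ) 1))
    (k : ℕ) :
    ∫ ω, (∑ i, u i ω) ^ (2 * k) ∂μ
      ≤ ((m : ℝ) / 3) ^ k * ∏ j ∈ Finset.range k, (2 * (j : ℝ) + 1) := by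
  classical
  -- a.e. bound on each variable
  have hae : ∀ᵐ ω ∂μ, ∀ i, |u i ω| ≤ 1 := by
    rw [ae_all_iff]
    intro i
    have h0 : μ (u i ⁻¹' (Set.Icc (-1 : ℝ) 1)ᶜ) = 0 := by
      rw [← Measure.map_apply (hmeas i) measurableSet_Icc.compl, hlaw i]
      simp [Measure.restrict_apply measurableSet_Icc.compl]
    have hset : {ω | ¬ |u i ω| ≤ 1} = u i ⁻¹' (Set.Icc (-1 : ℝ) 1)ᶜ := by
      ext ω; simp [abs_le]
    exact ae_iff.2 (hset ▸ h0)
  -- moments of each variable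
  have hmom : ∀ (i : Fin m) (n : ℕ),
      ∫ ω, u i ω ^ n ∂μ = if Even n then 1 / ((n : ℝ) + 1) else 0 := by
    intro i n
    have h := uniform_moment n
    rw [← hlaw i,
      integral_map (hmeas i).aemeasurable
        (by fun_prop : AEStronglyMeasurable (fun x : ℝ => x ^ n)
          (Measure.map (u i) μ))] at h
    exact h
  -- integrability of bounded measurable functions
  have hInt : ∀ (f : Ω → ℝ) (C : ℝ), Measurable f → (∀ᵐ ω ∂μ, |f ω| ≤ C) →
      Integrable f μ := fun f C hf hC =>
    ⟨hf.aestronglyMeasurable,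
      HasFiniteIntegral.of_bounded (C := C) (by simpa [Real.norm_eq_abs] using hC)⟩
  -- main induction over finsets
  have main : ∀ s : Finset (Fin m), ∀ K : ℕ,
      ∫ ω, (∑ i ∈ s, u i ω) ^ (2 * K) ∂μ ≤ ((s.card : ℝ) / 3) ^ K * DD K := by
    intro s
    induction s using Finset.cons_induction with
    | empty =>
      intro K
      rcases Nat.eq_zero_or_pos K with hK | hK
      · subst hK; simp [DD]
      · have h2K : (2 : ℕ) * K ≠ 0 := by omega
        simp [zero_pow h2K, zero_pow hK.ne']
    | cons a t ha ih =>
      intro K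
      set S : Ω → ℝ := fun ω => ∑ i ∈ t, u i ω with hSdef
      have hSmeas : Measurable S := by
        apply Finset.measurable_sum; intro i _; exact hmeas i
      have hSbd : ∀ᵐ ω ∂μ, |S ω| ≤ (t.card : ℝ) := by
        filter_upwards [hae] with ω hω
        calc |S ω| ≤ ∑ i ∈ t, |u i ω| := Finset.abs_sum_le_sum_abs _ _
          _ ≤ ∑ _i ∈ t, (1 : ℝ) := Finset.sum_le_sum (fun i _ => hω i)
          _ = (t.card : ℝ) := by simp
      have hXbd : ∀ᵐ ω ∂μ, |u a ω| ≤ 1 := by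
        filter_upwards [hae] with ω hω using hω a
      have hSX : IndepFun S (u a) μ := by
        have h := hindep.indepFun_finsetSum_of_notMem hmeas ha
        have heq : (∑ j ∈ t, u j) = S := by
          funext ω; simp [hSdef]
        rwa [heq] at h
      have hIndepPow : ∀ p q : ℕ,
          IndepFun (fun ω => u a ω ^ p) (fun ω => S ω ^ q) μ := fun p q =>
        hSX.symm.comp (measurable_id.pow_const p) (measurable_id.pow_const q)
      have hterm : ∀ j : ℕ, Integrable
          (fun ω => u a ω ^ j * S ω ^ (2 * K - j) * ((2 * K).choose j : ℝ)) μ := by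
        intro j
        apply hInt _ (1 * (t.card : ℝ) ^ (2 * K - j) * ((2 * K).choose j : ℝ))
        · exact (((hmeas a).pow_const j).mul (hSmeas.pow_const (2 * K - j))).mul_const _
        · filter_upwards [hSbd, hXbd] with ω h1 h2
          have e0 : |u a ω ^ j * S ω ^ (2 * K - j) * ((2 * K).choose j : ℝ)|
              = |u a ω| ^ j * |S ω| ^ (2 * K - j) * ((2 * K).choose j : ℝ) := by
            rw [abs_mul, abs_mul, abs_pow, abs_pow, Nat.abs_cast]
          rw [e0]
          have e1 : |u a ω| ^ j ≤ 1 := pow_le_one₀ (abs_nonneg _) h2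
          have e2 : |S ω| ^ (2 * K - j) ≤ (t.card : ℝ) ^ (2 * K - j) :=
            pow_le_pow_left₀ (abs_nonneg _) h1 _
          have e3 : |u a ω| ^ j * |S ω| ^ (2 * K - j) ≤ 1 * (t.card : ℝ) ^ (2 * K - j) :=
            mul_le_mul e1 e2 (by positivity) (by norm_num)
          exact mul_le_mul_of_nonneg_right e3 (by positivity)
      have hsum : ∀ ω, ∑ i ∈ Finset.cons a t ha, u i ω = u a ω + S ω := by
        intro ω; rw [Finset.sum_cons]
      have h1 : ∫ ω, (∑ i ∈ Finset.cons a t ha, u i ω) ^ (2 * K) ∂μ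
          = ∑ j ∈ Finset.range (2 * K + 1),
              (∫ ω, u a ω ^ j ∂μ) * (∫ ω, S ω ^ (2 * K - j) ∂μ)
                * ((2 * K).choose j : ℝ) := by
        have hb : ∀ ω, (∑ i ∈ Finset.cons a t ha, u i ω) ^ (2 * K)
            = ∑ j ∈ Finset.range (2 * K + 1),
                u a ω ^ j * S ω ^ (2 * K - j) * ((2 * K).choose j : ℝ) := by
          intro ω; rw [hsum ω]; exact add_pow _ _ _
        simp_rw [hb]
        rw [integral_finset_sum _ (fun j _ => hterm j)]
        refine Finset.sum_congr rfl fun j _ => ?_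
        rw [integral_mul_const]
        congr 1
        exact IndepFun.integral_mul_eq_mul_integral (hIndepPow j (2 * K - j))
          ((hmeas a).pow_const j).aestronglyMeasurable
          (hSmeas.pow_const _).aestronglyMeasurable
      have h2 : ∑ j ∈ Finset.range (2 * K + 1),
              (∫ ω, u a ω ^ j ∂μ) * (∫ ω, S ω ^ (2 * K - j) ∂μ)
                * ((2 * K).choose j : ℝ)
          = ∑ i ∈ Finset.range (K + 1),
              (1 / (2 * (i : ℝ) + 1)) * (∫ ω, S ω ^ (2 * (K - i)) ∂μ)
                * ((2 * K).choose (2 * i) : ℝ) := by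
        rw [sum_range_even_odd
          (fun j => (∫ ω, u a ω ^ j ∂μ) * (∫ ω, S ω ^ (2 * K - j) ∂μ)
            * ((2 * K).choose j : ℝ)) K]
        have hodd : (∑ i ∈ Finset.range K,
            (∫ ω, u a ω ^ (2 * i + 1) ∂μ) * (∫ ω, S ω ^ (2 * K - (2 * i + 1)) ∂μ)
              * ((2 * K).choose (2 * i + 1) : ℝ)) = 0 := by
          apply Finset.sum_eq_zero; intro i _
          rw [hmom a (2 * i + 1), if_neg (by rintro ⟨r, hr⟩; omega)]
          simp
        rw [hodd, add_zero]
        refine Finset.sum_congr rfl fun i hi => ?_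
        have hik : i ≤ K := Nat.lt_succ_iff.mp (Finset.mem_range.mp hi)
        have hexp : 2 * K - 2 * i = 2 * (K - i) := by omega
        rw [hexp, hmom a (2 * i), if_pos ⟨i, two_mul i⟩]
        push_cast
        ring_nf
      have hSnonneg : ∀ q : ℕ, 0 ≤ ∫ ω, S ω ^ (2 * q) ∂μ := fun q =>
        integral_nonneg (fun ω => (even_two_mul q).pow_nonneg _)
      have h3 : ∑ i ∈ Finset.range (K + 1),
              (1 / (2 * (i : ℝ) + 1)) * (∫ ω, S ω ^ (2 * (K - i)) ∂μ)
                * ((2 * K).choose (2 * i) : ℝ)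
          ≤ ∑ i ∈ Finset.range (K + 1),
              (DD i / 3 ^ i) * (((t.card : ℝ) / 3) ^ (K - i) * DD (K - i))
                * ((2 * K).choose (2 * i) : ℝ) := by
        apply Finset.sum_le_sum; intro i _
        have e1 := one_div_le_DD i
        have e2 := ih (K - i)
        have e3 := hSnonneg (K - i)
        apply mul_le_mul_of_nonneg_right _ (Nat.cast_nonneg _)
        exact mul_le_mul e1 e2 e3 (div_nonneg (DD_pos i).le (by positivity))
      have h4 : ∑ i ∈ Finset.range (K + 1),
              (DD i / 3 ^ i) * (((t.card : ℝ) / 3) ^ (K - i) * DD (K - i))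
                * ((2 * K).choose (2 * i) : ℝ)
          = (((t.card : ℝ) + 1) / 3) ^ K * DD K := by
        have hterm2 : ∀ i ∈ Finset.range (K + 1),
            (DD i / 3 ^ i) * (((t.card : ℝ) / 3) ^ (K - i) * DD (K - i))
              * ((2 * K).choose (2 * i) : ℝ)
            = (1 : ℝ) ^ i * (t.card : ℝ) ^ (K - i) * (K.choose i : ℝ)
                * (DD K / 3 ^ K) := by
          intro i hi
          have hik : i ≤ K := Nat.lt_succ_iff.mp (Finset.mem_range.mp hi)
          have hkey := key_identity hik
          have h3k : (3 : ℝ) ^ i * 3 ^ (K - i) = 3 ^ K := by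
            rw [← pow_add]; congr 1; omega
          have lhs_eq : (DD i / 3 ^ i) * (((t.card : ℝ) / 3) ^ (K - i) * DD (K - i))
              * ((2 * K).choose (2 * i) : ℝ)
              = (((2 * K).choose (2 * i) : ℝ) * DD i * DD (K - i))
                  * ((t.card : ℝ) ^ (K - i) / (3 ^ i * 3 ^ (K - i))) := by
            rw [div_pow]; ring
          rw [lhs_eq, hkey, h3k]
          ring
        rw [Finset.sum_congr rfl hterm2, ← Finset.sum_mul, ← add_pow]
        rw [div_pow]
        ring_nf
      calc ∫ ω, (∑ i ∈ Finset.cons a t ha, u i ω) ^ (2 * K) ∂μ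
          = _ := h1
        _ = _ := h2
        _ ≤ _ := h3
        _ = (((t.card : ℝ) + 1) / 3) ^ K * DD K := h4
        _ = (((Finset.cons a t ha).card : ℝ) / 3) ^ K * DD K := by
            rw [Finset.card_cons]; push_cast; ring
  have hfin := main Finset.univ k
  simpa [DD, Finset.card_univ] using hfin
end
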